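/- arXiv:1307.3375 — 6 statements merged into one kernel-verified Lean document; each statement's English description precedes it below -/
import Mathlib

section
/- If Y^d follows an exponential law with parameter \lambda, then E[X^r] = E[Y^s] + P_d/\lambda, where X^r = min(D_{B(Y^s)}, Y^s + Y^d) and P_d = P(D_{B(Y^s)} \geq Y^s + Y^d). -/
open MeasureTheory ProbabilityTheory Filter Set
open scoped ENNReal Topology

lemma natSInf_eq_iff {A : Set ℕ} {n : ℕ} :
    sInf A = n ↔ (n ∈ A ∧ ∀ m < n, m ∉ A) ∨ (n = 0 ∧ A = ∅) := by
  constructor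
  · intro h
    by_cases hA : A.Nonempty
    · exact Or.inl ⟨h ▸ Nat.sInf_mem hA, fun m hm => Nat.notMem_of_lt_sInf (h ▸ hm)⟩
    · rw [Set.not_nonempty_iff_eq_empty] at hA
      exact Or.inr ⟨by simpa [hA, Nat.sInf_empty] using h.symm, hA⟩
  · rintro (⟨h1, h2⟩ | ⟨h1, h2⟩)
    · refine le_antisymm (Nat.sInf_le h1) ?_
      by_contra hlt
      push_neg at hlt
      exact h2 _ hlt (Nat.sInf_mem ⟨n, h1⟩)
    · simp [h1, h2, Nat.sInf_empty]

noncomputable def bFun (p : ℝ × (ℕ → ℝ)) : ℕ :=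
  sInf {n | 1 ≤ n ∧ p.1 ≤ ∑ i ∈ Finset.range n, p.2 i}

noncomputable def gFun (p : ℝ × (ℕ → ℝ)) : ℝ :=
  (∑ i ∈ Finset.range (bFun p), p.2 i) - p.1

lemma measurable_partialSum (n : ℕ) :
    Measurable fun p : ℝ × (ℕ → ℝ) => ∑ i ∈ Finset.range n, p.2 i :=
  Finset.measurable_sum _ fun i _ => (measurable_pi_apply i).comp measurable_snd

lemma measurableSet_E (m : ℕ) :
    MeasurableSet {p : ℝ × (ℕ → ℝ) | 1 ≤ m ∧ p.1 ≤ ∑ i ∈ Finset.range m, p.2 i} := by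
  by_cases hm : 1 ≤ m
  · simpa [hm] using measurableSet_le measurable_fst (measurable_partialSum m)
  · simp [hm]

lemma measurable_bFun : Measurable bFun := by
  apply measurable_to_nat
  intro p
  show MeasurableSet {q | bFun q = bFun p}
  generalize bFun p = n
  have hset : {q : ℝ × (ℕ → ℝ) | bFun q = n}
      = (({q : ℝ × (ℕ → ℝ) | 1 ≤ n ∧ q.1 ≤ ∑ i ∈ Finset.range n, q.2 i}
          ∩ ⋂ m, ⋂ _ : m < n, {q : ℝ × (ℕ → ℝ) | 1 ≤ m ∧ q.1 ≤ ∑ i ∈ Finset.range m, q.2 i}ᶜ)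
        ∪ ({q : ℝ × (ℕ → ℝ) | n = 0}
          ∩ ⋂ m, {q : ℝ × (ℕ → ℝ) | 1 ≤ m ∧ q.1 ≤ ∑ i ∈ Finset.range m, q.2 i}ᶜ)) := by
    ext q
    simp only [Set.mem_setOf_eq, Set.mem_union, Set.mem_inter_iff, Set.mem_iInter,
      Set.mem_compl_iff, bFun, natSInf_eq_iff, Set.eq_empty_iff_forall_notMem]
  rw [hset]
  exact ((measurableSet_E n).inter
      (MeasurableSet.iInter fun m => MeasurableSet.iInter fun _ => (measurableSet_E m).compl)).union
    ((MeasurableSet.const _).inter (MeasurableSet.iInter fun m => (measurableSet_E m).compl))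

lemma measurable_gFun : Measurable gFun := by
  have h : Measurable fun p : ℝ × (ℕ → ℝ) => ∑ i ∈ Finset.range (bFun p), p.2 i := by
    have h2 : Measurable fun qn : (ℝ × (ℕ → ℝ)) × ℕ => ∑ i ∈ Finset.range qn.2, qn.1.2 i :=
      measurable_from_prod_countable_left fun n => measurable_partialSum n
    exact h2.comp (measurable_id.prodMk measurable_bFun)
  exact h.sub measurable_fst

lemma expMeasure_Iic_eq {lam : ℝ} (hlam : 0 < lam) {s : ℝ} (hs : 0 ≤ s) :
    expMeasure lam (Iic s) = ENNReal.ofReal (1 - Real.exp (-(lam * s))) := by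
  have h : expMeasure lam (Iic s) = ∫⁻ x in Iic s, exponentialPDF lam x := by
    rw [expMeasure, gammaMeasure, withDensity_apply _ measurableSet_Iic]; rfl
  rw [h, lintegral_exponentialPDF_eq_antiDeriv hlam s, if_pos hs]

lemma expMeasure_Ioi_eq {lam : ℝ} (hlam : 0 < lam) {s : ℝ} (hs : 0 ≤ s) :
    expMeasure lam (Ioi s) = ENNReal.ofReal (Real.exp (-(lam * s))) := by
  have : IsProbabilityMeasure (expMeasure lam) := isProbabilityMeasure_expMeasure hlam
  rw [← compl_Iic, prob_compl_eq_one_sub measurableSet_Iic, expMeasure_Iic_eq hlam hs]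
  have he1 : Real.exp (-(lam * s)) ≤ 1 :=
    Real.exp_le_one_iff.2 (neg_nonpos.2 (mul_nonneg hlam.le hs))
  refine ENNReal.sub_eq_of_eq_add ENNReal.ofReal_ne_top ?_
  rw [← ENNReal.ofReal_add (Real.exp_pos _).le (by linarith)]
  have h2 : Real.exp (-(lam * s)) + (1 - Real.exp (-(lam * s))) = 1 := by ring
  rw [h2, ENNReal.ofReal_one]

lemma expMeasure_Iio_zero {lam : ℝ} : expMeasure lam (Iio 0) = 0 := by
  rw [expMeasure, gammaMeasure, withDensity_apply _ measurableSet_Iio]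
  exact lintegral_gammaPDF_of_nonpos le_rfl

lemma expMeasure_singleton {lam : ℝ} (x : ℝ) : expMeasure lam {x} = 0 := by
  rw [expMeasure, gammaMeasure, withDensity_apply _ (measurableSet_singleton x)]
  exact setLIntegral_measure_zero _ _ (by simp)

lemma lintegral_min_expMeasure {lam : ℝ} (hlam : 0 < lam) {t : ℝ} (ht : 0 ≤ t) :
    ∫⁻ y, ENNReal.ofReal (min t y) ∂(expMeasure lam)
      = expMeasure lam (Iic t) / ENNReal.ofReal lam := by
  have hprob : IsProbabilityMeasure (expMeasure lam) := isProbabilityMeasure_expMeasure hlam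
  have hae : 0 ≤ᵐ[expMeasure lam] fun y => min t y := by
    have h0 : ∀ᵐ y ∂(expMeasure lam), 0 ≤ y := by
      rw [ae_iff]
      simpa [not_le, Iio] using expMeasure_Iio_zero (lam := lam)
    filter_upwards [h0] with y hy
    exact le_min ht hy
  rw [lintegral_eq_lintegral_meas_lt _ hae (measurable_const.min measurable_id).aemeasurable]
  have hmeas_eq : ∀ s : ℝ, expMeasure lam {y | s < min t y}
      = (Iio t).indicator (fun s => expMeasure lam (Ioi s)) s := by
    intro s
    by_cases hst : s < t
    · have h1 : {y : ℝ | s < min t y} = Ioi s := by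
        ext y; simp [lt_min_iff, hst]
      rw [h1, Set.indicator_of_mem (Set.mem_Iio.2 hst)]
    · have h1 : {y : ℝ | s < min t y} = ∅ := by
        ext y; simp only [Set.mem_setOf_eq, lt_min_iff, Set.mem_empty_iff_false, iff_false]
        exact fun h => hst h.1
      rw [h1, Set.indicator_of_notMem (by simpa using hst), measure_empty]
  rw [setLIntegral_congr_fun measurableSet_Ioi (fun s _ => hmeas_eq s),
    lintegral_indicator measurableSet_Iio _, Measure.restrict_restrict measurableSet_Iio]
  have hIooset : Iio t ∩ Ioi 0 = Ioo 0 t := by ext x; simp [Ioo, and_comm]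
  rw [hIooset, setLIntegral_congr_fun measurableSet_Ioo
    (fun s hs => expMeasure_Ioi_eq hlam hs.1.le)]
  have hIic : expMeasure lam (Iic t)
      = ENNReal.ofReal lam * ∫⁻ s in Ioo 0 t, ENNReal.ofReal (Real.exp (-(lam * s))) := by
    have h1 : expMeasure lam (Iic t) = expMeasure lam (Ioo 0 t) := by
      refine le_antisymm ?_ (measure_mono (Set.Ioo_subset_Ioc_self.trans Set.Ioc_subset_Iic_self))
      have hsub : Iic t ⊆ Iio 0 ∪ ({0} ∪ (Ioo 0 t ∪ {t})) := by
        intro x hx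
        rcases lt_or_ge x 0 with h | h
        · exact Or.inl h
        · rcases eq_or_lt_of_le h with h0 | h0
          · exact Or.inr (Or.inl h0.symm)
          · rcases eq_or_lt_of_le (show x ≤ t from hx) with h1 | h1
            · exact Or.inr (Or.inr (Or.inr h1))
            · exact Or.inr (Or.inr (Or.inl ⟨h0, h1⟩))
      calc expMeasure lam (Iic t) ≤ expMeasure lam (Iio 0 ∪ ({0} ∪ (Ioo 0 t ∪ {t}))) :=
            measure_mono hsub
        _ ≤ expMeasure lam (Iio 0) + (expMeasure lam {0}
              + (expMeasure lam (Ioo 0 t) + expMeasure lam {t})) := by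
            refine (measure_union_le _ _).trans ?_
            gcongr
            refine (measure_union_le _ _).trans ?_
            gcongr
            exact measure_union_le _ _
        _ = expMeasure lam (Ioo 0 t) := by
            simp [expMeasure_Iio_zero, expMeasure_singleton]
    have h2 : expMeasure lam (Ioo 0 t) = ∫⁻ s in Ioo 0 t, exponentialPDF lam s := by
      rw [expMeasure, gammaMeasure, withDensity_apply _ measurableSet_Ioo]; rfl
    rw [h1, h2, setLIntegral_congr_fun measurableSet_Ioo (fun s hs => by
      rw [exponentialPDF_of_nonneg hs.1.le, ENNReal.ofReal_mul hlam.le]),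
      lintegral_const_mul _ (by fun_prop : Measurable fun s : ℝ => ENNReal.ofReal (Real.exp (-(lam * s))))]
  rw [hIic, ENNReal.eq_div_iff (ENNReal.ofReal_pos.2 hlam).ne' ENNReal.ofReal_ne_top]

lemma ae_unbounded_sums {Ω : Type*} [MeasurableSpace Ω] (μ : Measure Ω) [IsProbabilityMeasure μ]
    (C : ℕ → Ω → ℝ) (hCmeas : ∀ i, Measurable (C i))
    (hCpos : ∀ i, ∀ᵐ ω ∂μ, 0 < C i ω)
    (hCiid : ∀ i j, IdentDistrib (C i) (C j) μ μ)
    (hCindep : iIndepFun C μ) :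
    ∀ᵐ ω ∂μ, ∀ M : ℝ, ∃ n, 1 ≤ n ∧ M ≤ ∑ i ∈ Finset.range n, C i ω := by
  -- find ε with positive probability
  obtain ⟨ε, hε, hp⟩ : ∃ ε : ℝ, 0 < ε ∧ 0 < μ (C 0 ⁻¹' Ioi ε) := by
    by_contra h
    push_neg at h
    have hz : ∀ k : ℕ, μ (C 0 ⁻¹' Ioi (1 / (k + 1))) = 0 := fun k =>
      le_antisymm (h _ (by positivity)) zero_le
    have hcover : C 0 ⁻¹' Ioi 0 ⊆ ⋃ k : ℕ, C 0 ⁻¹' Ioi (1 / (k + 1)) := by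
      intro ω hω
      have hω' : (0:ℝ) < C 0 ω := hω
      obtain ⟨k, hk⟩ := exists_nat_one_div_lt hω'
      exact Set.mem_iUnion.2 ⟨k, hk⟩
    have h0 : μ (C 0 ⁻¹' Ioi 0) = 0 :=
      le_antisymm ((measure_mono hcover).trans
        (le_of_eq (measure_iUnion_null fun k => hz k))) zero_le
    have h1 : μ (C 0 ⁻¹' Ioi 0) = 1 := by
      rw [← prob_compl_eq_zero_iff ((hCmeas 0) measurableSet_Ioi)]
      have h2 := hCpos 0
      rw [ae_iff] at h2
      have h3 : (C 0 ⁻¹' Ioi 0)ᶜ = {a | ¬ 0 < C 0 a} := by ext ω; simp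
      rw [h3]; exact h2
    rw [h0] at h1
    exact zero_ne_one h1
  -- the events
  set s : ℕ → Set Ω := fun n => C n ⁻¹' Ioi ε with hs
  have hsm : ∀ n, MeasurableSet (s n) := fun n => (hCmeas n) measurableSet_Ioi
  have hsmeas : ∀ n, μ (s n) = μ (s 0) := fun n =>
    (hCiid n 0).measure_mem_eq measurableSet_Ioi
  have hsindep : iIndepSet s μ := by
    rw [iIndepSet_iff_meas_biInter hsm]
    intro S
    exact hCindep.meas_biInter fun i _ => ⟨Ioi ε, measurableSet_Ioi, rfl⟩
  have htsum : (∑' n, μ (s n)) = ∞ := by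
    rw [tsum_congr hsmeas]
    exact ENNReal.tsum_const_eq_top_of_ne_zero hp.ne'
  have hlimsup : μ (limsup s atTop) = 1 :=
    measure_limsup_eq_one hsm hsindep htsum
  have haelimsup : ∀ᵐ ω ∂μ, ω ∈ limsup s atTop := by
    rw [ae_iff]
    have : {ω | ¬ ω ∈ limsup s atTop} = (limsup s atTop)ᶜ := rfl
    rw [this, prob_compl_eq_zero_iff (MeasurableSet.measurableSet_limsup hsm)]
    exact hlimsup
  have haenn : ∀ᵐ ω ∂μ, ∀ i, 0 < C i ω := (ae_all_iff).2 hCpos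
  filter_upwards [haelimsup, haenn] with ω hω hnn
  intro M
  have hinf : {n | ω ∈ s n}.Infinite := by
    rw [← Nat.frequently_atTop_iff_infinite]
    exact mem_limsup_iff_frequently_mem.1 hω
  obtain ⟨F, hFsub, hFcard⟩ := hinf.exists_subset_card_eq ⌈M / ε⌉₊
  refine ⟨F.sup id + 1, Nat.succ_le_succ (Nat.zero_le _), ?_⟩
  have hFrange : F ⊆ Finset.range (F.sup id + 1) := fun i hi =>
    Finset.mem_range.2 (Nat.lt_succ_of_le (Finset.le_sup (f := id) hi))
  calc M ≤ (⌈M / ε⌉₊ : ℝ) * ε := by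
        rw [← div_le_iff₀ hε]
        exact Nat.le_ceil _
    _ = F.card • ε := by rw [hFcard, nsmul_eq_mul]
    _ ≤ ∑ i ∈ F, C i ω :=
        Finset.card_nsmul_le_sum F _ ε fun i hi => (hFsub hi : ε < C i ω).le
    _ ≤ ∑ i ∈ Finset.range (F.sup id + 1), C i ω :=
        Finset.sum_le_sum_of_subset_of_nonneg hFrange fun i _ _ => (hnn i).le

/-- If `Y^d` is exponential with rate `λ`, then `E[X^r] = E[Y^s] + P_d / λ`, where
`X^r = min(D_{B(Y^s)}, Y^s + Y^d)` and `P_d = P(D_{B(Y^s)} ≥ Y^s + Y^d)`. -/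
theorem stmt2 {Ω : Type*} [MeasurableSpace Ω] (μ : Measure Ω) [IsProbabilityMeasure μ]
    (C : ℕ → Ω → ℝ) (Ys Yd : Ω → ℝ) (lam : ℝ) (hlam : 0 < lam)
    (hCmeas : ∀ i, Measurable (C i)) (hYsmeas : Measurable Ys) (hYdmeas : Measurable Yd)
    (hCpos : ∀ i, ∀ᵐ ω ∂μ, 0 < C i ω) (hYspos : ∀ᵐ ω ∂μ, 0 < Ys ω)
    (hCiid : ∀ i j, IdentDistrib (C i) (C j) μ μ)
    (hCindep : iIndepFun C μ)
    (hindepS : IndepFun (fun ω => fun i => C i ω) Ys μ)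
    (hindepD : IndepFun (fun ω => (Ys ω, fun i => C i ω)) Yd μ)
    (hYd : μ.map Yd = expMeasure lam)
    (D : ℕ → Ω → ℝ) (hD : ∀ n ω, D n ω = ∑ i ∈ Finset.range n, C i ω)
    (B : ℝ → Ω → ℕ) (hB : ∀ t ω, B t ω = sInf {n | 1 ≤ n ∧ t ≤ D n ω})
    (Xr : Ω → ℝ) (hXr : ∀ ω, Xr ω = min (D (B (Ys ω) ω) ω) (Ys ω + Yd ω)) :
    ∫⁻ ω, ENNReal.ofReal (Xr ω) ∂μ
      = ∫⁻ ω, ENNReal.ofReal (Ys ω) ∂μ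
        + μ {ω | Ys ω + Yd ω ≤ D (B (Ys ω) ω) ω} / ENNReal.ofReal lam := by
  have hprob : IsProbabilityMeasure (expMeasure lam) := isProbabilityMeasure_expMeasure hlam
  set ν := expMeasure lam with hν
  set T : Ω → ℝ := fun ω => gFun (Ys ω, fun i => C i ω) with hTdef
  have hZ : Measurable fun ω => ((Ys ω, fun i => C i ω) : ℝ × (ℕ → ℝ)) :=
    hYsmeas.prodMk (measurable_pi_lambda _ fun i => hCmeas i)
  have hT : Measurable T := measurable_gFun.comp hZ
  have hBeq : ∀ ω, bFun (Ys ω, fun i => C i ω) = B (Ys ω) ω := by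
    intro ω
    rw [hB]
    unfold bFun
    congr 1
    ext n
    simp only [Set.mem_setOf_eq, hD]
  have hTeq : ∀ ω, T ω = D (B (Ys ω) ω) ω - Ys ω := by
    intro ω
    show gFun (Ys ω, fun i => C i ω) = _
    unfold gFun
    rw [hBeq ω, hD]
  have hYd0 : ∀ᵐ ω ∂μ, 0 ≤ Yd ω := by
    rw [ae_iff]
    have h1 : {ω | ¬ 0 ≤ Yd ω} = Yd ⁻¹' Iio 0 := by ext ω; simp [not_le]
    rw [h1, ← Measure.map_apply hYdmeas measurableSet_Iio, hYd]
    exact expMeasure_Iio_zero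
  have hT0 : ∀ᵐ ω ∂μ, 0 ≤ T ω := by
    filter_upwards [ae_unbounded_sums μ C hCmeas hCpos hCiid hCindep] with ω hω
    obtain ⟨n, hn1, hn2⟩ := hω (Ys ω)
    have hne : {n | 1 ≤ n ∧ Ys ω ≤ D n ω}.Nonempty := ⟨n, hn1, by rw [hD]; exact hn2⟩
    have hmem := Nat.sInf_mem hne
    rw [← hB (Ys ω) ω] at hmem
    have h2 : Ys ω ≤ D (B (Ys ω) ω) ω := hmem.2
    rw [hTeq ω]
    linarith
  have hTYd : IndepFun T Yd μ := hindepD.comp measurable_gFun measurable_id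
  have hmap : μ.map (fun ω => (T ω, Yd ω)) = (μ.map T).prod (μ.map Yd) :=
    (indepFun_iff_map_prod_eq_prod_map_map hT.aemeasurable hYdmeas.aemeasurable).1 hTYd
  have hmapT0 : ∀ᵐ t ∂(μ.map T), 0 ≤ t :=
    (ae_map_iff hT.aemeasurable measurableSet_Ici).2 hT0
  have hXr' : ∀ᵐ ω ∂μ, ENNReal.ofReal (Xr ω)
      = ENNReal.ofReal (Ys ω) + ENNReal.ofReal (min (T ω) (Yd ω)) := by
    filter_upwards [hYspos, hYd0, hT0] with ω h1 h2 h3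
    have hXreq : Xr ω = Ys ω + min (T ω) (Yd ω) := by
      rw [hXr, hTeq ω]
      rcases le_total (D (B (Ys ω) ω) ω) (Ys ω + Yd ω) with h | h
      · rw [min_eq_left h, min_eq_left (by linarith)]; ring
      · rw [min_eq_right h, min_eq_right (by linarith)]
    rw [hXreq, ENNReal.ofReal_add h1.le (le_min h3 h2)]
  rw [lintegral_congr_ae hXr', lintegral_add_left hYsmeas.ennreal_ofReal]
  congr 1
  have hpairmeas : Measurable fun ω => (T ω, Yd ω) := hT.prodMk hYdmeas
  have hfm : Measurable fun p : ℝ × ℝ => ENNReal.ofReal (min p.1 p.2) :=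
    (measurable_fst.min measurable_snd).ennreal_ofReal
  have hlamtop : (ENNReal.ofReal lam)⁻¹ ≠ ∞ :=
    ENNReal.inv_ne_top.2 (ENNReal.ofReal_pos.2 hlam).ne'
  have hL : ∫⁻ ω, ENNReal.ofReal (min (T ω) (Yd ω)) ∂μ
      = (∫⁻ t, ν (Iic t) ∂(μ.map T)) / ENNReal.ofReal lam := by
    have e1 : ∫⁻ ω, ENNReal.ofReal (min (T ω) (Yd ω)) ∂μ
        = ∫⁻ p, ENNReal.ofReal (min p.1 p.2) ∂(μ.map (fun ω => (T ω, Yd ω))) :=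
      (lintegral_map hfm hpairmeas).symm
    rw [e1, hmap, hYd, lintegral_prod _ hfm.aemeasurable]
    show (∫⁻ t, ∫⁻ y, ENNReal.ofReal (min t y) ∂ν ∂(μ.map T)) = _
    have e2 : (fun t => ∫⁻ y, ENNReal.ofReal (min t y) ∂ν)
        =ᵐ[μ.map T] fun t => ν (Iic t) * (ENNReal.ofReal lam)⁻¹ := by
      filter_upwards [hmapT0] with t ht
      rw [hν, lintegral_min_expMeasure hlam ht, div_eq_mul_inv]
    rw [lintegral_congr_ae e2, lintegral_mul_const' _ _ hlamtop, div_eq_mul_inv]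
  have hE : {ω | Ys ω + Yd ω ≤ D (B (Ys ω) ω) ω}
      = (fun ω => (T ω, Yd ω)) ⁻¹' {p : ℝ × ℝ | p.2 ≤ p.1} := by
    ext ω
    simp only [Set.mem_setOf_eq, Set.mem_preimage]
    rw [hTeq ω]
    constructor <;> intro h <;> linarith
  have hEmeas : MeasurableSet {p : ℝ × ℝ | p.2 ≤ p.1} :=
    measurableSet_le measurable_snd measurable_fst
  have hR : μ {ω | Ys ω + Yd ω ≤ D (B (Ys ω) ω) ω} = ∫⁻ t, ν (Iic t) ∂(μ.map T) := by
    rw [hE, ← Measure.map_apply hpairmeas hEmeas, hmap, hYd, Measure.prod_apply hEmeas]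
    exact lintegral_congr fun t => rfl
  rw [hL, hR]
end

section
/- Under the assumptions E[(Y^s)^2] < \infty and E[C^2] < \infty, the random variable K^r = inf{n\geq 1 : D_n \geq Y^s} satisfies E[(K^r)^2] < \infty. -/
open MeasureTheory ProbabilityTheory Filter Set
open scoped ENNReal Topology

lemma aux_sum_odd (k : ℕ) : ∑ n ∈ Finset.range k, (2*n+1) = k^2 := by
  induction k with
  | zero => simp
  | succ k ih => rw [Finset.sum_range_succ, ih]; ring

lemma aux_tail_sq {k : ℕ} : ((k : ℝ≥0∞))^2 = ∑' n : ℕ, (if n < k then ((2*n+1 : ℕ) : ℝ≥0∞) else 0) := by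
  rw [tsum_eq_sum (s := Finset.range k) (by intro n hn; simp [Finset.mem_range] at hn; simp [hn])]
  have : ∀ n ∈ Finset.range k, (if n < k then ((2*n+1 : ℕ) : ℝ≥0∞) else 0) = ((2*n+1 : ℕ) : ℝ≥0∞) := by
    intro n hn; simp [Finset.mem_range.mp hn]
  rw [Finset.sum_congr rfl this, ← Nat.cast_sum, aux_sum_odd]
  push_cast; ring

/-- Under `E[(Y^s)²] < ∞` and `E[C²] < ∞`, the random variable
`K^r = inf {n ≥ 1 : D_n ≥ Y^s}` satisfies `E[(K^r)²] < ∞`. -/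
theorem stmt5 {Ω : Type*} [MeasurableSpace Ω] (μ : Measure Ω) [IsProbabilityMeasure μ]
    (C : ℕ → Ω → ℝ) (Ys : Ω → ℝ)
    (hCmeas : ∀ i, Measurable (C i)) (hYsmeas : Measurable Ys)
    (hCpos : ∀ i, ∀ᵐ ω ∂μ, 0 < C i ω) (hYspos : ∀ᵐ ω ∂μ, 0 < Ys ω)
    (hCiid : ∀ i j, IdentDistrib (C i) (C j) μ μ)
    (hCindep : iIndepFun C μ)
    (hindep : IndepFun (fun ω => fun i => C i ω) Ys μ)
    (hC2 : Integrable (fun ω => (C 0 ω) ^ 2) μ)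
    (hYs2 : Integrable (fun ω => (Ys ω) ^ 2) μ)
    (D : ℕ → Ω → ℝ) (hD : ∀ n ω, D n ω = ∑ i ∈ Finset.range n, C i ω)
    (Kr : Ω → ℕ) (hKr : ∀ ω, Kr ω = sInf {n | 1 ≤ n ∧ Ys ω ≤ D n ω}) :
    ∫⁻ ω, ((Kr ω : ℝ≥0∞)) ^ 2 ∂μ < ∞ := by
  ------------------------------------------------------------------
  -- Step 1 : `r = E[exp(-C₀)] ∈ [0, 1)`
  ------------------------------------------------------------------
  set r : ℝ := ∫ ω, Real.exp (-(C 0 ω)) ∂μ with hr_def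
  have hexpint : ∀ i, Integrable (fun ω => Real.exp (-(C i ω))) μ := by
    intro i
    refine Integrable.mono' (integrable_const 1) ((hCmeas i).neg.exp.aestronglyMeasurable) ?_
    filter_upwards [hCpos i] with ω hω
    rw [Real.norm_eq_abs, abs_of_pos (Real.exp_pos _)]
    exact Real.exp_le_one_iff.mpr (by linarith)
  have hr0 : 0 ≤ r := integral_nonneg fun ω => (Real.exp_pos _).le
  have hr1 : r < 1 := by
    have hfnn : 0 ≤ᵐ[μ] fun ω => 1 - Real.exp (-(C 0 ω)) := by
      filter_upwards [hCpos 0] with ω hω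
      have := Real.exp_le_one_iff.mpr (by linarith : -(C 0 ω) ≤ 0)
      simp only [Pi.zero_apply]; linarith
    have hfint : Integrable (fun ω => 1 - Real.exp (-(C 0 ω))) μ :=
      (integrable_const 1).sub (hexpint 0)
    have hsupp : MeasurableSet (Function.support fun ω => 1 - Real.exp (-(C 0 ω))) := by
      have : Measurable (fun ω => 1 - Real.exp (-(C 0 ω))) :=
        measurable_const.sub (hCmeas 0).neg.exp
      exact this (measurableSet_singleton 0).compl
    have hae : ∀ᵐ ω ∂μ, ω ∈ Function.support fun ω => 1 - Real.exp (-(C 0 ω)) := by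
      filter_upwards [hCpos 0] with ω hω
      have h1 : Real.exp (-(C 0 ω)) < 1 := Real.exp_lt_one_iff.mpr (by linarith)
      simp only [Function.mem_support]
      intro h; linarith [sub_eq_zero.mp h]
    have hμs : 0 < μ (Function.support fun ω => 1 - Real.exp (-(C 0 ω))) := by
      have h0 : μ (Function.support fun ω => 1 - Real.exp (-(C 0 ω)))ᶜ = 0 := by
        have := hae
        rw [ae_iff] at this
        simpa [Set.compl_def] using this
      have h2 := measure_add_measure_compl (μ := μ) hsupp
      rw [h0, add_zero, measure_univ] at h2
      rw [h2]; norm_num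
    have hpos : 0 < ∫ ω, (1 - Real.exp (-(C 0 ω))) ∂μ :=
      (integral_pos_iff_support_of_nonneg_ae hfnn hfint).mpr hμs
    rw [integral_sub (integrable_const 1) (hexpint 0)] at hpos
    simp [measure_univ] at hpos
    linarith
  ------------------------------------------------------------------
  -- Step 2 : choice of `α` and `q`
  ------------------------------------------------------------------
  set α : ℝ := (1 - r) / 2 with hα_def
  have hα : 0 < α := by simp only [hα_def]; linarith
  set q : ℝ := Real.exp α * r with hq_def
  have hq0 : 0 ≤ q := mul_nonneg (Real.exp_pos _).le hr0
  have hq1 : q < 1 := by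
    have h1 : r ≤ Real.exp (r - 1) := by
      have := Real.add_one_le_exp (r - 1); linarith
    have h2 : q ≤ Real.exp α * Real.exp (r - 1) :=
      mul_le_mul_of_nonneg_left h1 (Real.exp_pos _).le
    rw [← Real.exp_add] at h2
    have h3 : α + (r - 1) = (r - 1) / 2 := by rw [hα_def]; ring
    rw [h3] at h2
    have h4 : Real.exp ((r - 1) / 2) < 1 := Real.exp_lt_one_iff.mpr (by linarith)
    linarith
  ------------------------------------------------------------------
  -- Step 3 : Chernoff bound `μ {D_n < α n} ≤ q ^ n`
  ------------------------------------------------------------------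
  have hmgf : ∀ i, mgf (C i) μ (-1) = r := by
    intro i
    have h1 : mgf (C i) μ (-1) = ∫ ω, Real.exp (-(C i ω)) ∂μ := by
      unfold mgf; simp [neg_one_mul]
    have h2 : IdentDistrib (fun ω => Real.exp (-(C i ω))) (fun ω => Real.exp (-(C 0 ω))) μ μ :=
      (hCiid i 0).comp (Real.measurable_exp.comp measurable_neg)
    rw [h1, h2.integral_eq, hr_def]
  have hDfun : ∀ n, D n = ∑ i ∈ Finset.range n, C i := by
    intro n; funext ω; rw [hD]; simp
  have hDmeas : ∀ n, Measurable (D n) := by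
    intro n
    have : D n = fun ω => ∑ i ∈ Finset.range n, C i ω := funext (hD n)
    rw [this]
    exact Finset.measurable_sum _ fun i _ => hCmeas i
  have hDint : ∀ n, ∫ ω, Real.exp (-(D n ω)) ∂μ = r ^ n := by
    intro n
    have h1 : mgf (D n) μ (-1) = r ^ n := by
      rw [hDfun, hCindep.mgf_sum hCmeas]
      rw [Finset.prod_congr rfl fun i _ => hmgf i, Finset.prod_const, Finset.card_range]
    rw [← h1]; unfold mgf; simp [neg_one_mul]
  have hDnn : ∀ n, ∀ᵐ ω ∂μ, 0 ≤ D n ω := by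
    intro n
    have := ae_all_iff.mpr hCpos
    filter_upwards [this] with ω hω
    rw [hD]
    exact Finset.sum_nonneg fun i _ => (hω i).le
  have hDexpint : ∀ n, Integrable (fun ω => Real.exp (-(D n ω))) μ := by
    intro n
    refine Integrable.mono' (integrable_const 1) ((hDmeas n).neg.exp.aestronglyMeasurable) ?_
    filter_upwards [hDnn n] with ω hω
    rw [Real.norm_eq_abs, abs_of_pos (Real.exp_pos _)]
    exact Real.exp_le_one_iff.mpr (by linarith)
  have hChern : ∀ n : ℕ, μ {ω | D n ω < α * n} ≤ ENNReal.ofReal (q ^ n) := by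
    intro n
    set f : Ω → ℝ≥0∞ := fun ω => ENNReal.ofReal (Real.exp (-(D n ω))) with hf_def
    have hfmeas : Measurable f := ENNReal.measurable_ofReal.comp (hDmeas n).neg.exp
    set ε : ℝ≥0∞ := ENNReal.ofReal (Real.exp (-(α * n))) with hε_def
    have hε0 : ε ≠ 0 := by simp [hε_def, Real.exp_pos]
    have hεtop : ε ≠ ∞ := ENNReal.ofReal_ne_top
    have hsub : {ω | D n ω < α * n} ⊆ {ω | ε ≤ f ω} := by
      intro ω hω
      simp only [Set.mem_setOf_eq] at *
      exact ENNReal.ofReal_le_ofReal (Real.exp_le_exp.mpr (by linarith))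
    have hlf : ∫⁻ ω, f ω ∂μ = ENNReal.ofReal (r ^ n) := by
      rw [hf_def, ← ofReal_integral_eq_lintegral_ofReal (hDexpint n)
        (Eventually.of_forall fun ω => (Real.exp_pos _).le), hDint n]
    have hmarkov := mul_meas_ge_le_lintegral₀ (μ := μ) hfmeas.aemeasurable ε
    rw [hlf] at hmarkov
    calc μ {ω | D n ω < α * n} ≤ μ {ω | ε ≤ f ω} := measure_mono hsub
      _ ≤ ε⁻¹ * ENNReal.ofReal (r ^ n) := by
          have h := mul_le_mul_right hmarkov ε⁻¹
          rwa [← mul_assoc, ENNReal.inv_mul_cancel hε0 hεtop, one_mul] at h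
      _ = ENNReal.ofReal (q ^ n) := by
          rw [hε_def, ← ENNReal.ofReal_inv_of_pos (Real.exp_pos _), ← Real.exp_neg, neg_neg,
            ← ENNReal.ofReal_mul (Real.exp_pos _).le, hq_def, mul_pow, ← Real.exp_nat_mul]
          ring_nf
  ------------------------------------------------------------------
  -- Step 4 : tail sets of `Kr` : measurability and bound
  ------------------------------------------------------------------
  have htail_eq : ∀ n : ℕ, {ω | n < Kr ω} =
      (⋃ m : ℕ, {ω | 1 ≤ m ∧ Ys ω ≤ D m ω}) ∩
        (⋂ m ∈ Finset.range (n+1), {ω | 1 ≤ m ∧ Ys ω ≤ D m ω}ᶜ) := by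
    intro n
    ext ω
    simp only [Set.mem_setOf_eq, Set.mem_inter_iff, Set.mem_iUnion, Set.mem_iInter,
      Set.mem_compl_iff, Finset.mem_range]
    rw [hKr]
    constructor
    · intro h
      have hne : {k | 1 ≤ k ∧ Ys ω ≤ D k ω}.Nonempty := by
        by_contra hc
        rw [Set.not_nonempty_iff_eq_empty] at hc
        rw [hc, Nat.sInf_empty] at h
        omega
      refine ⟨hne.imp fun k hk => hk, fun m hm hmem => ?_⟩
      have := Nat.sInf_le (s := {k | 1 ≤ k ∧ Ys ω ≤ D k ω}) hmem
      omega
    · rintro ⟨⟨k, hk⟩, h2⟩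
      have hmem := Nat.sInf_mem (⟨k, hk⟩ : {k | 1 ≤ k ∧ Ys ω ≤ D k ω}.Nonempty)
      by_contra hc
      push_neg at hc
      exact h2 _ (by omega) hmem
  have hAm : ∀ m : ℕ, MeasurableSet {ω | 1 ≤ m ∧ Ys ω ≤ D m ω} := by
    intro m
    by_cases h : 1 ≤ m
    · have : {ω | 1 ≤ m ∧ Ys ω ≤ D m ω} = {ω | Ys ω ≤ D m ω} := by
        ext ω; simp [h]
      rw [this]; exact measurableSet_le hYsmeas (hDmeas m)
    · have : {ω | 1 ≤ m ∧ Ys ω ≤ D m ω} = ∅ := by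
        ext ω; simp [h]
      rw [this]; exact MeasurableSet.empty
  have htail_meas : ∀ n : ℕ, MeasurableSet {ω | n < Kr ω} := by
    intro n
    rw [htail_eq n]
    exact (MeasurableSet.iUnion hAm).inter
      (Finset.measurableSet_biInter _ fun m _ => (hAm m).compl)
  have htail_le : ∀ n : ℕ, μ {ω | n < Kr ω} ≤ μ {ω | α * n ≤ Ys ω} + ENNReal.ofReal (q ^ n) := by
    intro n
    have hsub : {ω | n < Kr ω} ≤ᵐ[μ] ({ω | α * n ≤ Ys ω} ∪ {ω | D n ω < α * n} : Set Ω) := by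
      filter_upwards [hYspos] with ω hy
      intro hn
      have hn2 : n < Kr ω := hn
      rcases le_or_gt (α * n) (Ys ω) with h1 | h1
      · exact Or.inl h1
      · refine Or.inr ?_
        show D n ω < α * n
        by_contra h2
        push_neg at h2
        rcases Nat.eq_zero_or_pos n with h0 | h0
        · rw [h0] at h1; simp at h1; linarith
        · have hmem : n ∈ {k | 1 ≤ k ∧ Ys ω ≤ D k ω} := ⟨h0, by linarith⟩
          have := Nat.sInf_le hmem
          rw [hKr] at hn2
          omega
    calc μ {ω | n < Kr ω} ≤ μ ({ω | α * n ≤ Ys ω} ∪ {ω | D n ω < α * n}) := measure_mono_ae hsub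
      _ ≤ μ {ω | α * n ≤ Ys ω} + μ {ω | D n ω < α * n} := measure_union_le _ _
      _ ≤ μ {ω | α * n ≤ Ys ω} + ENNReal.ofReal (q ^ n) := add_le_add_right (hChern n) _
  ------------------------------------------------------------------
  -- Step 5 : the geometric series part
  ------------------------------------------------------------------
  have T2 : ∑' n : ℕ, ((2*n+1 : ℕ) : ℝ≥0∞) * ENNReal.ofReal (q ^ n) < ∞ := by
    have hsum : Summable (fun n : ℕ => ((2*n+1 : ℕ) : ℝ) * q ^ n) := by
      have h1 : Summable (fun n : ℕ => (n : ℝ) * q ^ n) := by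
        have := summable_pow_mul_geometric_of_norm_lt_one 1 (r := q)
          (by rw [Real.norm_eq_abs, abs_of_nonneg hq0]; exact hq1)
        simpa using this
      have h2 : Summable (fun n : ℕ => q ^ n) := summable_geometric_of_lt_one hq0 hq1
      have := (h1.mul_left 2).add h2
      refine this.congr fun n => ?_
      push_cast; ring
    have hnn : ∀ n : ℕ, 0 ≤ ((2*n+1 : ℕ) : ℝ) * q ^ n :=
      fun n => mul_nonneg (Nat.cast_nonneg _) (pow_nonneg hq0 n)
    have heq : ∀ n : ℕ, ((2*n+1 : ℕ) : ℝ≥0∞) * ENNReal.ofReal (q ^ n)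
        = ENNReal.ofReal (((2*n+1 : ℕ) : ℝ) * q ^ n) := by
      intro n
      rw [ENNReal.ofReal_mul (Nat.cast_nonneg _), ENNReal.ofReal_natCast]
    rw [tsum_congr heq, ← ENNReal.ofReal_tsum_of_nonneg hnn hsum]
    exact ENNReal.ofReal_lt_top
  ------------------------------------------------------------------
  -- Step 6 : the `Ys` part
  ------------------------------------------------------------------
  have hYsint : Integrable Ys μ := by
    refine Integrable.mono' (hYs2.add (integrable_const 1)) hYsmeas.aestronglyMeasurable ?_
    filter_upwards with ω
    simp only [Real.norm_eq_abs, Pi.add_apply]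
    rcases abs_cases (Ys ω) with ⟨h, _⟩ | ⟨h, _⟩ <;> rw [h] <;> nlinarith
  have hg : Integrable (fun ω => (Ys ω / α + 1) ^ 2) μ := by
    have heq : (fun ω => (Ys ω / α + 1)^2)
        = fun ω => (α⁻¹ * α⁻¹) * (Ys ω)^2 + (2*α⁻¹) * Ys ω + 1 := by
      funext ω; field_simp; ring
    rw [heq]
    exact ((hYs2.const_mul _).add (hYsint.const_mul _)).add (integrable_const 1)
  have hBmeas : ∀ n : ℕ, MeasurableSet {ω | α * n ≤ Ys ω} :=
    fun n => measurableSet_le measurable_const hYsmeas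
  have hpt : ∀ ω, (∑' n : ℕ, ({ω' | α * n ≤ Ys ω'}.indicator (fun _ => ((2*n+1 : ℕ) : ℝ≥0∞)) ω))
      ≤ ENNReal.ofReal ((Ys ω / α + 1) ^ 2) := by
    intro ω
    rcases lt_or_ge (Ys ω) 0 with h | h
    · have hz : ∀ n : ℕ, {ω' | α * n ≤ Ys ω'}.indicator (fun _ => ((2*n+1 : ℕ) : ℝ≥0∞)) ω = 0 := by
        intro n
        apply Set.indicator_of_notMem
        simp only [Set.mem_setOf_eq, not_le]
        calc Ys ω < 0 := h
          _ ≤ α * n := by positivity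
      rw [tsum_congr hz]
      simp
    · set N : ℕ := ⌊Ys ω / α⌋₊ with hN
      have hterm : ∀ n ∉ Finset.range (N+1),
          {ω' | α * n ≤ Ys ω'}.indicator (fun _ => ((2*n+1 : ℕ) : ℝ≥0∞)) ω = 0 := by
        intro n hn
        simp only [Finset.mem_range, not_lt] at hn
        apply Set.indicator_of_notMem
        simp only [Set.mem_setOf_eq, not_le]
        have h1 : Ys ω / α < n :=
          lt_of_lt_of_le (Nat.lt_floor_add_one _) (by exact_mod_cast hn)
        calc Ys ω = (Ys ω / α) * α := by field_simp
          _ < n * α := mul_lt_mul_of_pos_right h1 hα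
          _ = α * n := mul_comm _ _
      rw [tsum_eq_sum hterm]
      have hle1 : ∑ n ∈ Finset.range (N+1),
          {ω' | α * n ≤ Ys ω'}.indicator (fun _ => ((2*n+1 : ℕ) : ℝ≥0∞)) ω
          ≤ ∑ n ∈ Finset.range (N+1), ((2*n+1 : ℕ) : ℝ≥0∞) :=
        Finset.sum_le_sum fun n _ => Set.indicator_le_self _ _ ω
      refine hle1.trans ?_
      rw [← Nat.cast_sum, aux_sum_odd]
      have hNle : ((N : ℝ) + 1) ≤ Ys ω / α + 1 := by
        have := Nat.floor_le (div_nonneg h hα.le)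
        linarith
      have hcast : (((N+1)^2 : ℕ) : ℝ≥0∞) = ENNReal.ofReal (((N : ℝ) + 1)^2) := by
        rw [← ENNReal.ofReal_natCast]; congr 1; push_cast; ring
      rw [hcast]
      exact ENNReal.ofReal_le_ofReal (pow_le_pow_left₀ (by positivity) hNle 2)
  have T1 : ∑' n : ℕ, ((2*n+1 : ℕ) : ℝ≥0∞) * μ {ω | α * n ≤ Ys ω} < ∞ := by
    have hswap : ∑' n : ℕ, ((2*n+1 : ℕ) : ℝ≥0∞) * μ {ω | α * n ≤ Ys ω}
        = ∫⁻ ω, ∑' n : ℕ, ({ω' | α * n ≤ Ys ω'}.indicator (fun _ => ((2*n+1 : ℕ) : ℝ≥0∞)) ω) ∂μ := by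
      rw [lintegral_tsum fun n => (measurable_const.indicator (hBmeas n)).aemeasurable]
      exact tsum_congr fun n => (lintegral_indicator_const (hBmeas n) _).symm
    rw [hswap]
    calc ∫⁻ ω, ∑' n : ℕ, ({ω' | α * n ≤ Ys ω'}.indicator (fun _ => ((2*n+1 : ℕ) : ℝ≥0∞)) ω) ∂μ
        ≤ ∫⁻ ω, ENNReal.ofReal ((Ys ω / α + 1) ^ 2) ∂μ := lintegral_mono hpt
      _ < ∞ := hg.lintegral_lt_top
  ------------------------------------------------------------------
  -- Step 7 : conclusion
  ------------------------------------------------------------------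
  have hsq : ∀ ω, ((Kr ω : ℝ≥0∞))^2
      = ∑' n : ℕ, {ω' | n < Kr ω'}.indicator (fun _ => ((2*n+1 : ℕ) : ℝ≥0∞)) ω := by
    intro ω
    have h1 : ∀ n : ℕ, {ω' | n < Kr ω'}.indicator (fun _ => ((2*n+1 : ℕ) : ℝ≥0∞)) ω
        = if n < Kr ω then ((2*n+1 : ℕ) : ℝ≥0∞) else 0 := by
      intro n; by_cases h : n < Kr ω <;> simp [Set.indicator, h]
    rw [tsum_congr h1]
    exact aux_tail_sq
  calc ∫⁻ ω, ((Kr ω : ℝ≥0∞))^2 ∂μ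
      = ∑' n : ℕ, ∫⁻ ω, {ω' | n < Kr ω'}.indicator (fun _ => ((2*n+1 : ℕ) : ℝ≥0∞)) ω ∂μ := by
        rw [← lintegral_tsum fun n => (measurable_const.indicator (htail_meas n)).aemeasurable]
        exact lintegral_congr hsq
    _ = ∑' n : ℕ, ((2*n+1 : ℕ) : ℝ≥0∞) * μ {ω | n < Kr ω} :=
        tsum_congr fun n => lintegral_indicator_const (htail_meas n) _
    _ ≤ ∑' n : ℕ, (((2*n+1 : ℕ) : ℝ≥0∞) * μ {ω | α * n ≤ Ys ω}
          + ((2*n+1 : ℕ) : ℝ≥0∞) * ENNReal.ofReal (q ^ n)) := by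
        refine ENNReal.tsum_le_tsum fun n => ?_
        rw [← mul_add]
        exact mul_le_mul_right (htail_le n) _
    _ = (∑' n : ℕ, ((2*n+1 : ℕ) : ℝ≥0∞) * μ {ω | α * n ≤ Ys ω})
          + ∑' n : ℕ, ((2*n+1 : ℕ) : ℝ≥0∞) * ENNReal.ofReal (q ^ n) := ENNReal.tsum_add
    _ < ∞ := ENNReal.add_lt_top.mpr ⟨T1, T2⟩
end

section
/- E[C_{B(Y^s)}^2] \leq E[C^2] E[K^r], where B(Y^s) is the index of the first inspection at or after Y^s and K^r = B(Y^s). -/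
open MeasureTheory ProbabilityTheory Filter Set
open scoped ENNReal Topology

lemma my_indep_sup {Ω : Type*} {mΩ : MeasurableSpace Ω} {μ : Measure Ω} [IsProbabilityMeasure μ]
    {m₁ m₂ m₃ : MeasurableSpace Ω} (h₁ : m₁ ≤ mΩ) (h₂ : m₂ ≤ mΩ) (h₃ : m₃ ≤ mΩ)
    (h12 : Indep m₁ m₂ μ) (h123 : Indep (m₁ ⊔ m₂) m₃ μ) : Indep m₁ (m₂ ⊔ m₃) μ := by
  have h12' := (Indep_iff _ _ _).1 h12
  have h123' := (Indep_iff _ _ _).1 h123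
  set p1 : Set (Set Ω) := {s | MeasurableSet[m₁] s} with hp1def
  set p2 : Set (Set Ω) :=
    {s | ∃ s₂ s₃, MeasurableSet[m₂] s₂ ∧ MeasurableSet[m₃] s₃ ∧ s = s₂ ∩ s₃} with hp2def
  have hgen2 : m₂ ⊔ m₃ = MeasurableSpace.generateFrom p2 := by
    apply le_antisymm
    · refine sup_le ?_ ?_
      · intro s hs
        exact MeasurableSpace.measurableSet_generateFrom
          ⟨s, univ, hs, MeasurableSet.univ, (inter_univ s).symm⟩
      · intro s hs
        exact MeasurableSpace.measurableSet_generateFrom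
          ⟨univ, s, MeasurableSet.univ, hs, (univ_inter s).symm⟩
    · refine MeasurableSpace.generateFrom_le ?_
      rintro s ⟨s₂, s₃, hs₂, hs₃, rfl⟩
      exact ((le_sup_left : m₂ ≤ m₂ ⊔ m₃) _ hs₂).inter ((le_sup_right : m₃ ≤ m₂ ⊔ m₃) _ hs₃)
  have hgen1 : m₁ = MeasurableSpace.generateFrom p1 :=
    (@MeasurableSpace.generateFrom_measurableSet Ω m₁).symm
  refine IndepSets.indep h₁ (hgen2 ▸ sup_le h₂ h₃) ?_ ?_ hgen1 hgen2
    ((IndepSets_iff _ _ _).2 ?_)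
  · intro s hs t ht _
    exact MeasurableSet.inter hs ht
  · rintro s ⟨s₂, s₃, hs₂, hs₃, rfl⟩ t ⟨t₂, t₃, ht₂, ht₃, rfl⟩ _
    exact ⟨s₂ ∩ t₂, s₃ ∩ t₃, hs₂.inter ht₂, hs₃.inter ht₃, by ac_rfl⟩
  · rintro A B hA ⟨B₂, B₃, hB₂, hB₃, rfl⟩
    have e1 : μ (A ∩ (B₂ ∩ B₃)) = μ (A ∩ B₂) * μ B₃ := by
      rw [← inter_assoc]
      exact h123' _ _ (((le_sup_left : m₁ ≤ m₁ ⊔ m₂) _ hA).inter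
        ((le_sup_right : m₂ ≤ m₁ ⊔ m₂) _ hB₂)) hB₃
    have e2 : μ (B₂ ∩ B₃) = μ B₂ * μ B₃ :=
      h123' _ _ ((le_sup_right : m₂ ≤ m₁ ⊔ m₂) _ hB₂) hB₃
    rw [e1, h12' _ _ hA hB₂, e2, mul_assoc]


lemma my_key {Ω : Type*} {mΩ : MeasurableSpace Ω} {μ : Measure Ω} [IsProbabilityMeasure μ]
    (C : ℕ → Ω → ℝ) (Ys : Ω → ℝ)
    (hCmeas : ∀ i, Measurable (C i)) (hYsmeas : Measurable Ys)
    (hCindep : iIndepFun C μ)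
    (hindep : IndepFun (fun ω => fun i => C i ω) Ys μ) (n : ℕ) {f g : Ω → ℝ≥0∞}
    (hf : Measurable[MeasurableSpace.comap (C (n + 1)) inferInstance] f)
    (hg : Measurable[(⨆ i ∈ Set.Ico 1 (n + 1), MeasurableSpace.comap (C i) inferInstance)
      ⊔ MeasurableSpace.comap Ys inferInstance] g) :
    ∫⁻ ω, f ω * g ω ∂μ = (∫⁻ ω, f ω ∂μ) * ∫⁻ ω, g ω ∂μ := by
  have hcomap_le : ∀ i : ℕ, MeasurableSpace.comap (C i) inferInstance
      ≤ MeasurableSpace.comap (fun ω => fun i => C i ω) inferInstance := by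
    intro i
    have h1 : C i = (fun gg : ℕ → ℝ => gg i) ∘ (fun ω => fun j => C j ω) := rfl
    rw [h1, ← MeasurableSpace.comap_comp]
    exact MeasurableSpace.comap_mono (measurable_pi_apply i).comap_le
  have h12 : Indep (MeasurableSpace.comap (C (n + 1)) inferInstance)
      (⨆ i ∈ Set.Ico 1 (n + 1), MeasurableSpace.comap (C i) inferInstance) μ := by
    have h := indep_iSup_of_disjoint (m := fun i => MeasurableSpace.comap (C i) inferInstance)
      (fun i => (hCmeas i).comap_le) hCindep.iIndep
      (S := {n + 1}) (T := Set.Ico 1 (n + 1)) (by simp [Set.disjoint_left])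
    simpa using h
  have h123 : Indep ((MeasurableSpace.comap (C (n + 1)) inferInstance)
      ⊔ ⨆ i ∈ Set.Ico 1 (n + 1), MeasurableSpace.comap (C i) inferInstance)
      (MeasurableSpace.comap Ys inferInstance) μ := by
    refine indep_of_indep_of_le_left ((IndepFun_iff_Indep _ _ _).1 hindep) ?_
    exact sup_le (hcomap_le (n + 1)) (iSup₂_le fun i _ => hcomap_le i)
  have hind := my_indep_sup (mΩ := mΩ) (hCmeas (n + 1)).comap_le
    (iSup₂_le fun i _ => (hCmeas i).comap_le) hYsmeas.comap_le h12 h123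
  exact lintegral_mul_eq_lintegral_mul_lintegral_of_independent_measurableSpace
    (hCmeas (n + 1)).comap_le
    (sup_le (iSup₂_le fun i _ => (hCmeas i).comap_le) hYsmeas.comap_le) hind hf hg

/-- `E[C_{B(Y^s)}²] ≤ E[C²] E[K^r]`, where `B(Y^s) = K^r` is the index of the first
inspection at or after `Y^s`.  Here the gaps are `C_1, C_2, …` and `D_n = C_1 + ⋯ + C_n`. -/
theorem stmt6 {Ω : Type*} [MeasurableSpace Ω] (μ : Measure Ω) [IsProbabilityMeasure μ]
    (C : ℕ → Ω → ℝ) (Ys : Ω → ℝ)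
    (hCmeas : ∀ i, Measurable (C i)) (hYsmeas : Measurable Ys)
    (hCpos : ∀ i, ∀ᵐ ω ∂μ, 0 < C i ω) (hYspos : ∀ᵐ ω ∂μ, 0 < Ys ω)
    (hCiid : ∀ i j, IdentDistrib (C i) (C j) μ μ)
    (hCindep : iIndepFun C μ)
    (hindep : IndepFun (fun ω => fun i => C i ω) Ys μ)
    (hC2 : Integrable (fun ω => (C 1 ω) ^ 2) μ)
    (D : ℕ → Ω → ℝ) (hD : ∀ n ω, D n ω = ∑ i ∈ Finset.Icc 1 n, C i ω)
    (Kr : Ω → ℕ) (hKr : ∀ ω, Kr ω = sInf {n | 1 ≤ n ∧ Ys ω ≤ D n ω}) :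
    ∫⁻ ω, ENNReal.ofReal ((C (Kr ω) ω) ^ 2) ∂μ
      ≤ (∫⁻ ω, ENNReal.ofReal ((C 1 ω) ^ 2) ∂μ) * ∫⁻ ω, (Kr ω : ℝ≥0∞) ∂μ := by
  classical
  set E2 := ∫⁻ ω, ENNReal.ofReal ((C 1 ω) ^ 2) ∂μ with hE2
  set A : ℕ → Set Ω := fun n => ⋂ m ∈ Set.Ico 1 n, {ω | D m ω < Ys ω} with hAdef
  have hDmeas : ∀ m, Measurable (D m) := by
    intro m
    have h : D m = fun ω => ∑ i ∈ Finset.Icc 1 m, C i ω := funext fun ω => hD m ω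
    rw [h]
    exact Finset.measurable_sum _ fun i _ => hCmeas i
  have hAmeas : ∀ n, MeasurableSet (A n) := fun n =>
    MeasurableSet.biInter (Set.to_countable _) fun m _ => measurableSet_lt (hDmeas m) hYsmeas
  -- integrability of `C 1` and positivity of its mean
  have hCint : Integrable (C 1) μ := by
    have hint : Integrable (fun ω => 1 + C 1 ω ^ 2) μ := (integrable_const 1).add hC2
    refine hint.mono' (hCmeas 1).aestronglyMeasurable ?_
    filter_upwards with ω
    rw [Real.norm_eq_abs]
    nlinarith [sq_abs (C 1 ω), sq_nonneg (|C 1 ω| - 1), abs_nonneg (C 1 ω)]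
  have hEpos : 0 < ∫ ω, C 1 ω ∂μ := by
    rw [integral_pos_iff_support_of_nonneg_ae ((hCpos 1).mono fun ω h => h.le) hCint]
    have h1 : μ {ω | 0 < C 1 ω} = 1 := by
      rw [← measure_univ (μ := μ)]
      exact measure_congr (Filter.eventuallyEq_univ.2 (hCpos 1))
    calc (0 : ℝ≥0∞) < 1 := by norm_num
      _ = μ {ω | 0 < C 1 ω} := h1.symm
      _ ≤ μ (Function.support (C 1)) := measure_mono fun ω h => ne_of_gt h
  -- strong law: `D n → ∞` a.e.
  have hslln : ∀ᵐ ω ∂μ, Tendsto (fun n => D n ω) atTop atTop := by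
    have hsl := strong_law_ae (μ := μ) (fun i => C (i + 1)) hCint
      (fun i j hij => hCindep.indepFun (by omega)) (fun i => hCiid (i + 1) 1)
    filter_upwards [hsl] with ω hω
    have hmul : Tendsto
        (fun n : ℕ => ((n : ℝ)⁻¹ • ∑ i ∈ Finset.range n, C (i + 1) ω) * n) atTop atTop :=
      Filter.Tendsto.pos_mul_atTop hEpos hω tendsto_natCast_atTop_atTop
    refine hmul.congr' ?_
    filter_upwards [eventually_ge_atTop 1] with n hn
    have hn0 : (n : ℝ) ≠ 0 := Nat.cast_ne_zero.2 (by omega)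
    have hsum : D n ω = ∑ i ∈ Finset.range n, C (i + 1) ω := by
      rw [hD n ω, ← Finset.Ico_add_one_right_eq_Icc, Finset.sum_Ico_eq_sum_range]
      exact Finset.sum_congr rfl fun i _ => by rw [Nat.add_comm]
    rw [smul_eq_mul, inv_mul_eq_div, div_mul_cancel₀ _ hn0, hsum]
  have hne : ∀ᵐ ω ∂μ, ({n | 1 ≤ n ∧ Ys ω ≤ D n ω}).Nonempty := by
    filter_upwards [hslln] with ω hω
    obtain ⟨n, hn1, hn2⟩ := ((eventually_ge_atTop 1).and (hω.eventually_ge_atTop (Ys ω))).exists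
    exact ⟨n, hn1, hn2⟩
  -- pointwise bound
  have hbound : ∀ᵐ ω ∂μ, ENNReal.ofReal (C (Kr ω) ω ^ 2)
      ≤ ∑' n, (A (n + 1)).indicator (fun ω' => ENNReal.ofReal (C (n + 1) ω' ^ 2)) ω := by
    filter_upwards [hne] with ω hω
    have hk : Kr ω = sInf {n | 1 ≤ n ∧ Ys ω ≤ D n ω} := hKr ω
    have hmem : Kr ω ∈ {n | 1 ≤ n ∧ Ys ω ≤ D n ω} := hk ▸ Nat.sInf_mem hω
    have hk1 : 1 ≤ Kr ω := hmem.1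
    have hA : ω ∈ A (Kr ω) := by
      simp only [hAdef, Set.mem_iInter, Set.mem_Ico, Set.mem_setOf_eq, and_imp]
      intro m hm1 hm2
      by_contra hcon
      push_neg at hcon
      have : Kr ω ≤ m := hk ▸ Nat.sInf_le ⟨hm1, hcon⟩
      omega
    have hks : Kr ω - 1 + 1 = Kr ω := Nat.succ_pred_eq_of_pos hk1
    calc ENNReal.ofReal (C (Kr ω) ω ^ 2)
        = (A (Kr ω - 1 + 1)).indicator
            (fun ω' => ENNReal.ofReal (C (Kr ω - 1 + 1) ω' ^ 2)) ω := by
          rw [hks, Set.indicator_of_mem hA]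
      _ ≤ ∑' n, (A (n + 1)).indicator (fun ω' => ENNReal.ofReal (C (n + 1) ω' ^ 2)) ω :=
          ENNReal.le_tsum (Kr ω - 1)
  -- comap inequalities
  have hcomap_le : ∀ i, MeasurableSpace.comap (C i) inferInstance
      ≤ MeasurableSpace.comap (fun ω => fun i => C i ω) inferInstance := by
    intro i
    have h1 : C i = (fun g : ℕ → ℝ => g i) ∘ (fun ω => fun j => C j ω) := rfl
    rw [h1, ← MeasurableSpace.comap_comp]
    exact MeasurableSpace.comap_mono (measurable_pi_apply i).comap_le
  -- the key independence computation
  have key : ∀ n : ℕ,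
      ∫⁻ ω, ENNReal.ofReal (C (n + 1) ω ^ 2) * (A (n + 1)).indicator (fun _ => (1 : ℝ≥0∞)) ω ∂μ
        = E2 * μ (A (n + 1)) := by
    intro n
    have hfmeas : Measurable[MeasurableSpace.comap (C (n + 1)) inferInstance]
        fun ω => ENNReal.ofReal (C (n + 1) ω ^ 2) :=
      (ENNReal.measurable_ofReal.comp (measurable_id.pow_const 2)).comp
        (Measurable.of_comap_le le_rfl)
    have hAsub : MeasurableSet[(⨆ i ∈ Set.Ico 1 (n + 1),
        MeasurableSpace.comap (C i) inferInstance)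
        ⊔ MeasurableSpace.comap Ys inferInstance] (A (n + 1)) := by
      rw [hAdef]
      refine MeasurableSet.biInter (Set.to_countable _) fun m hm => ?_
      have hDm : Measurable[(⨆ i ∈ Set.Ico 1 (n + 1),
          MeasurableSpace.comap (C i) inferInstance)
          ⊔ MeasurableSpace.comap Ys inferInstance] (D m) := by
        have h : D m = fun ω => ∑ i ∈ Finset.Icc 1 m, C i ω := funext fun ω => hD m ω
        rw [h]
        refine Finset.measurable_sum _ fun i hi => ?_
        have hiIco : i ∈ Set.Ico 1 (n + 1) := by
          rw [Finset.mem_Icc] at hi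
          rw [Set.mem_Ico] at hm ⊢
          omega
        have hile : MeasurableSpace.comap (C i) inferInstance
            ≤ ⨆ i ∈ Set.Ico 1 (n + 1), MeasurableSpace.comap (C i) inferInstance :=
          le_iSup₂ (f := fun i (_ : i ∈ Set.Ico 1 (n + 1)) =>
            MeasurableSpace.comap (C i) inferInstance) i hiIco
        exact (Measurable.of_comap_le le_rfl).mono (hile.trans le_sup_left) le_rfl
      have hYs' : Measurable[(⨆ i ∈ Set.Ico 1 (n + 1),
          MeasurableSpace.comap (C i) inferInstance)
          ⊔ MeasurableSpace.comap Ys inferInstance] Ys :=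
        (Measurable.of_comap_le le_rfl).mono le_sup_right le_rfl
      exact measurableSet_lt hDm hYs'
    have hgmeas : Measurable[(⨆ i ∈ Set.Ico 1 (n + 1),
        MeasurableSpace.comap (C i) inferInstance)
        ⊔ MeasurableSpace.comap Ys inferInstance]
        ((A (n + 1)).indicator (fun _ => (1 : ℝ≥0∞))) :=
      Measurable.indicator measurable_const hAsub
    have hmul := my_key C Ys hCmeas hYsmeas hCindep hindep n hfmeas hgmeas
    have hiOne : ∫⁻ ω, (A (n + 1)).indicator (fun _ => (1 : ℝ≥0∞)) ω ∂μ = μ (A (n + 1)) :=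
      lintegral_indicator_one (hAmeas (n + 1))
    rw [hmul, hiOne]
    congr 1
    rw [hE2]
    exact ((hCiid (n + 1) 1).comp
      (ENNReal.measurable_ofReal.comp (measurable_id.pow_const 2))).lintegral_eq
  have hprod : ∀ (n : ℕ) (ω : Ω),
      (A (n + 1)).indicator (fun ω' => ENNReal.ofReal (C (n + 1) ω' ^ 2)) ω
        = ENNReal.ofReal (C (n + 1) ω ^ 2) * (A (n + 1)).indicator (fun _ => (1 : ℝ≥0∞)) ω := by
    intro n ω
    by_cases h : ω ∈ A (n + 1) <;> simp [h]
  -- measurability of the level sets of Kr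
  have hPm : ∀ m : ℕ, MeasurableSet {ω | 1 ≤ m ∧ Ys ω ≤ D m ω} := by
    intro m
    by_cases hm : 1 ≤ m
    · have h : {ω | 1 ≤ m ∧ Ys ω ≤ D m ω} = {ω | Ys ω ≤ D m ω} := by ext ω; simp [hm]
      rw [h]; exact measurableSet_le hYsmeas (hDmeas m)
    · have h : {ω | 1 ≤ m ∧ Ys ω ≤ D m ω} = ∅ := by ext ω; simp [hm]
      rw [h]; exact MeasurableSet.empty
  have hKrmeas : ∀ n : ℕ, MeasurableSet {ω | n < Kr ω} := by
    intro n
    have h : {ω | n < Kr ω} =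
        (⋃ m, {ω | 1 ≤ m ∧ Ys ω ≤ D m ω}) ∩
          ⋂ m ∈ Set.Iic n, ({ω | 1 ≤ m ∧ Ys ω ≤ D m ω})ᶜ := by
      ext ω
      simp only [Set.mem_inter_iff, Set.mem_iUnion, Set.mem_iInter, Set.mem_compl_iff,
        Set.mem_setOf_eq, Set.mem_Iic]
      rw [hKr ω]
      constructor
      · intro hlt
        have hpos : 0 < sInf {m | 1 ≤ m ∧ Ys ω ≤ D m ω} := lt_of_le_of_lt (Nat.zero_le n) hlt
        have hne' := Nat.nonempty_of_pos_sInf hpos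
        exact ⟨⟨_, Nat.sInf_mem hne'⟩, fun m hm => Nat.notMem_of_lt_sInf (lt_of_le_of_lt hm hlt)⟩
      · rintro ⟨⟨m0, hm0⟩, h2⟩
        by_contra hcon
        push_neg at hcon
        exact h2 _ hcon
          (Nat.sInf_mem (⟨m0, hm0⟩ : Set.Nonempty {m | 1 ≤ m ∧ Ys ω ≤ D m ω}))
    rw [h]
    exact (MeasurableSet.iUnion hPm).inter
      (MeasurableSet.biInter (Set.to_countable _) fun m _ => (hPm m).compl)
  -- the inclusion A (n+1) ⊆ {n < Kr} a.e.
  have hincl : ∀ n : ℕ, μ (A (n + 1)) ≤ μ {ω | n < Kr ω} := by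
    intro n
    refine measure_mono_ae ?_
    filter_upwards [hne] with ω hω hA
    have hk : Kr ω = sInf {m | 1 ≤ m ∧ Ys ω ≤ D m ω} := hKr ω
    have hmem : Kr ω ∈ {m | 1 ≤ m ∧ Ys ω ≤ D m ω} := hk ▸ Nat.sInf_mem hω
    show n < Kr ω
    by_contra hcon
    push_neg at hcon
    have hA2 : ω ∈ A (n + 1) := hA
    have hA' : ∀ m, 1 ≤ m → m < n + 1 → D m ω < Ys ω := by
      simp only [hAdef, Set.mem_iInter, Set.mem_Ico, Set.mem_setOf_eq, and_imp] at hA2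
      exact hA2
    exact absurd hmem.2 (not_le.2 (hA' (Kr ω) hmem.1 (by omega)))
  -- E[Kr] as a sum of tail probabilities
  have hKrint : ∫⁻ ω, (Kr ω : ℝ≥0∞) ∂μ = ∑' n : ℕ, μ {ω | n < Kr ω} := by
    have hpt : ∀ ω, (Kr ω : ℝ≥0∞)
        = ∑' n : ℕ, ({ω' | n < Kr ω'}).indicator (fun _ => (1 : ℝ≥0∞)) ω := by
      intro ω
      have h1 : ∀ b ∉ Finset.range (Kr ω),
          ({ω' | b < Kr ω'}).indicator (fun _ => (1 : ℝ≥0∞)) ω = 0 := by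
        intro b hb
        exact Set.indicator_of_notMem
          (show ω ∉ {ω' | b < Kr ω'} by simpa [Finset.mem_range] using hb) _
      have h2 : ∀ b ∈ Finset.range (Kr ω),
          ({ω' | b < Kr ω'}).indicator (fun _ => (1 : ℝ≥0∞)) ω = 1 := by
        intro b hb
        exact Set.indicator_of_mem (show ω ∈ {ω' | b < Kr ω'} from Finset.mem_range.1 hb) _
      calc (Kr ω : ℝ≥0∞)
          = ∑ b ∈ Finset.range (Kr ω),
              ({ω' | b < Kr ω'}).indicator (fun _ => (1 : ℝ≥0∞)) ω := by
            rw [Finset.sum_congr rfl h2, Finset.sum_const, Finset.card_range, nsmul_eq_mul,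
              mul_one]
        _ = ∑' n : ℕ, ({ω' | n < Kr ω'}).indicator (fun _ => (1 : ℝ≥0∞)) ω :=
            (tsum_eq_sum h1).symm
    calc ∫⁻ ω, (Kr ω : ℝ≥0∞) ∂μ
        = ∫⁻ ω, ∑' n : ℕ, ({ω' | n < Kr ω'}).indicator (fun _ => (1 : ℝ≥0∞)) ω ∂μ :=
          lintegral_congr hpt
      _ = ∑' n : ℕ, ∫⁻ ω, ({ω' | n < Kr ω'}).indicator (fun _ => (1 : ℝ≥0∞)) ω ∂μ :=
          lintegral_tsum fun n => (measurable_const.indicator (hKrmeas n)).aemeasurable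
      _ = ∑' n : ℕ, μ {ω | n < Kr ω} := tsum_congr fun n =>
            (lintegral_indicator_one (hKrmeas n) : _)
  -- putting everything together
  calc ∫⁻ ω, ENNReal.ofReal (C (Kr ω) ω ^ 2) ∂μ
      ≤ ∫⁻ ω, ∑' n, (A (n + 1)).indicator (fun ω' => ENNReal.ofReal (C (n + 1) ω' ^ 2)) ω ∂μ :=
        lintegral_mono_ae hbound
    _ = ∑' n, ∫⁻ ω, (A (n + 1)).indicator (fun ω' => ENNReal.ofReal (C (n + 1) ω' ^ 2)) ω ∂μ :=
        lintegral_tsum fun n =>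
          (((ENNReal.measurable_ofReal.comp (measurable_id.pow_const 2)).comp
            (hCmeas (n + 1))).indicator (hAmeas (n + 1))).aemeasurable
    _ = ∑' n, E2 * μ (A (n + 1)) := by
        refine tsum_congr fun n => ?_
        rw [← key n]
        exact lintegral_congr fun ω => hprod n ω
    _ = E2 * ∑' n, μ (A (n + 1)) := ENNReal.tsum_mul_left
    _ ≤ E2 * ∑' n, μ {ω | n < Kr ω} := mul_le_mul_right (ENNReal.tsum_le_tsum hincl) _
    _ = E2 * ∫⁻ ω, (Kr ω : ℝ≥0∞) ∂μ := by rw [hKrint]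
end

section
/- For a renewal process N_t with i.i.d. interarrival times X_n satisfying P(X=0)<1 and E[X]<\infty, N_t/t converges almost surely to 1/E[X] as t \to \infty. -/
open MeasureTheory ProbabilityTheory Filter Set
open scoped ENNReal Topology

/-- Deterministic renewal lemma: if `a n / n → m > 0` and `a` is monotone with `a 0 = 0`,
then the counting function `t ↦ sSup {n | a n ≤ t}` satisfies `N t / t → 1 / m`. -/
lemma renewal_aux (a : ℕ → ℝ) (ha0 : a 0 = 0) (hmono : Monotone a)
    (m : ℝ) (hm : 0 < m)
    (hlim : Tendsto (fun n : ℕ => a n / n) atTop (𝓝 m)) :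
    Tendsto (fun t : ℝ => ((sSup {n | a n ≤ t} : ℕ) : ℝ) / t) atTop (𝓝 (1 / m)) := by
  -- a tends to infinity
  have hev : ∀ᶠ n : ℕ in atTop, m / 2 ≤ a n / n :=
    hlim.eventually (eventually_ge_nhds (by linarith))
  have hatop : Tendsto a atTop atTop := by
    have h1 : Tendsto (fun n : ℕ => m / 2 * n) atTop atTop :=
      (tendsto_natCast_atTop_atTop (R := ℝ)).const_mul_atTop (by linarith)
    apply tendsto_atTop_mono' _ _ h1
    filter_upwards [hev, eventually_ge_atTop 1] with n hn hn1
    have hn0 : (0 : ℝ) < n := by exact_mod_cast hn1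
    rw [le_div_iff₀ hn0] at hn
    linarith
  have hbdd : ∀ t : ℝ, BddAbove {n : ℕ | a n ≤ t} := by
    intro t
    obtain ⟨K, hK⟩ := (hatop.eventually_gt_atTop t).exists_forall_of_atTop
    exact ⟨K, fun n hn => by
      by_contra h
      exact absurd hn (not_le.2 (hK n (le_of_not_ge h)))⟩
  set Nf : ℝ → ℕ := fun t => sSup {n : ℕ | a n ≤ t} with hNf
  have hmem : ∀ t : ℝ, 0 ≤ t → a (Nf t) ≤ t := by
    intro t ht
    exact Nat.sSup_mem ⟨0, by simpa [ha0] using ht⟩ (hbdd t)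
  have hge : ∀ (n : ℕ) (t : ℝ), a n ≤ t → n ≤ Nf t := fun n t hn => le_csSup (hbdd t) hn
  have hlt : ∀ t : ℝ, 0 ≤ t → t < a (Nf t + 1) := by
    intro t ht
    by_contra h
    have := hge (Nf t + 1) t (le_of_not_gt h)
    omega
  have hNtop : Tendsto Nf atTop atTop := by
    rw [tendsto_atTop]
    intro b
    filter_upwards [eventually_ge_atTop (a b)] with t ht
    exact hge b t ht
  have hN1top : Tendsto (fun t : ℝ => Nf t + 1) atTop atTop :=
    tendsto_atTop_mono (fun t => Nat.le_succ _) hNtop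
  -- lower bound tends to m
  have hlow : Tendsto (fun t : ℝ => a (Nf t) / (Nf t : ℝ)) atTop (𝓝 m) := hlim.comp hNtop
  -- (Nf t + 1)/(Nf t) → 1
  have hratio : Tendsto (fun t : ℝ => ((Nf t : ℝ) + 1) / (Nf t : ℝ)) atTop (𝓝 1) := by
    have h0 : Tendsto (fun t : ℝ => ((Nf t : ℝ))⁻¹) atTop (𝓝 0) :=
      tendsto_inv_atTop_zero.comp (tendsto_natCast_atTop_atTop.comp hNtop)
    have : Tendsto (fun t : ℝ => 1 + ((Nf t : ℝ))⁻¹) atTop (𝓝 (1 + 0)) :=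
      tendsto_const_nhds.add h0
    rw [add_zero] at this
    apply this.congr'
    filter_upwards [hNtop.eventually_ge_atTop 1] with t ht
    have h0 : (Nf t : ℝ) ≠ 0 := Nat.cast_ne_zero.2 (by omega)
    rw [add_div, div_self h0, one_div]
  have hupp : Tendsto (fun t : ℝ => a (Nf t + 1) / ((Nf t : ℝ) + 1) * (((Nf t : ℝ) + 1) / (Nf t : ℝ)))
      atTop (𝓝 (m * 1)) := by
    refine Tendsto.mul ?_ hratio
    exact (hlim.comp hN1top).congr fun t => by simp
  rw [mul_one] at hupp
  -- squeeze : t / Nf t → m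
  have hmid : Tendsto (fun t : ℝ => t / (Nf t : ℝ)) atTop (𝓝 m) := by
    apply tendsto_of_tendsto_of_tendsto_of_le_of_le' hlow hupp
    · filter_upwards [eventually_ge_atTop (0 : ℝ), hNtop.eventually_ge_atTop 1] with t ht hN
      have hN0 : (0 : ℝ) < (Nf t : ℝ) := by exact_mod_cast hN
      gcongr
      exact hmem t ht
    · filter_upwards [eventually_ge_atTop (0 : ℝ), hNtop.eventually_ge_atTop 1] with t ht hN
      have hN0 : (0 : ℝ) < (Nf t : ℝ) := by exact_mod_cast hN
      have hN1 : ((Nf t : ℝ) + 1) ≠ 0 := by positivity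
      have heq : a (Nf t + 1) / ((Nf t : ℝ) + 1) * (((Nf t : ℝ) + 1) / (Nf t : ℝ))
          = a (Nf t + 1) / (Nf t : ℝ) := by
        field_simp
      rw [heq]
      have := (hlt t ht).le
      gcongr
  have hinv : Tendsto (fun t : ℝ => (t / (Nf t : ℝ))⁻¹) atTop (𝓝 m⁻¹) :=
    hmid.inv₀ (ne_of_gt hm)
  rw [one_div]
  refine hinv.congr (fun t => ?_)
  rw [inv_div]

/-- Strong law for renewal processes: `N_t / t → 1 / E[X]` almost surely as `t → ∞`. -/
theorem stmt9 {Ω : Type*} [MeasurableSpace Ω] (μ : Measure Ω) [IsProbabilityMeasure μ]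
    (X : ℕ → Ω → ℝ)
    (hXmeas : ∀ i, Measurable (X i)) (hXnonneg : ∀ i, ∀ᵐ ω ∂μ, 0 ≤ X i ω)
    (hXiid : ∀ i j, IdentDistrib (X i) (X j) μ μ)
    (hXindep : iIndepFun X μ)
    (hX0 : μ {ω | X 0 ω = 0} < 1)
    (hXint : Integrable (X 0) μ)
    (T : ℕ → Ω → ℝ) (hT : ∀ n ω, T n ω = ∑ i ∈ Finset.range n, X i ω)
    (N : ℝ → Ω → ℕ) (hN : ∀ t ω, N t ω = sSup {n | T n ω ≤ t}) :
    ∀ᵐ ω ∂μ, Tendsto (fun t : ℝ => (N t ω : ℝ) / t) atTop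
      (nhds (1 / ∫ ω, X 0 ω ∂μ)) := by
  set m := ∫ ω, X 0 ω ∂μ with hmdef
  have hm : 0 < m := by
    rw [hmdef, integral_pos_iff_support_of_nonneg_ae (hXnonneg 0) hXint]
    by_contra h
    push_neg at h
    have hsupp : μ (Function.support (X 0)) = 0 := le_antisymm h zero_le
    have hms : MeasurableSet (Function.support (X 0)) :=
      (hXmeas 0) (measurableSet_singleton 0).compl
    have : μ {ω | X 0 ω = 0} = 1 := by
      have hc : {ω | X 0 ω = 0} = (Function.support (X 0))ᶜ := by
        ext ω; simp [Function.mem_support]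
      rw [hc, measure_compl hms (measure_ne_top _ _), hsupp, measure_univ]
      simp
    rw [this] at hX0
    exact lt_irrefl _ hX0
  have hslln := strong_law_ae_real X hXint
    (fun i j hij => hXindep.indepFun hij) (fun i => hXiid i 0)
  have hnn : ∀ᵐ ω ∂μ, ∀ i, 0 ≤ X i ω := ae_all_iff.2 hXnonneg
  filter_upwards [hslln, hnn] with ω hω hωnn
  have ha0 : T 0 ω = 0 := by simp [hT]
  have hmono : Monotone (fun n => T n ω) := by
    apply monotone_nat_of_le_succ
    intro n
    simp only [hT, Finset.sum_range_succ]
    linarith [hωnn n]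
  have hlim : Tendsto (fun n : ℕ => T n ω / n) atTop (𝓝 m) := by
    simpa [hT] using hω
  have := renewal_aux (fun n => T n ω) ha0 hmono m hm hlim
  simpa [hN] using this
end

section
/- For a renewal reward process Z_t = \sum_{i=1}^{N_t} Y_i with i.i.d. pairs (X_n,Y_n), E[X]<\infty, P(X=0)<1, Z_t/t converges almost surely to E[Y]/E[X] as t\to\infty. -/
open MeasureTheory ProbabilityTheory Filter Set
open scoped ENNReal Topology


lemma renewal_det (a b : ℕ → ℝ) (m L : ℝ) (hm : 0 < m) (ha0 : a 0 = 0)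
    (hA : Tendsto (fun n : ℕ => a n / n) atTop (𝓝 m))
    (hB : Tendsto (fun n : ℕ => b n / n) atTop (𝓝 L)) :
    Tendsto (fun t : ℝ => b (sSup {n | a n ≤ t}) / t) atTop (𝓝 (L / m)) := by
  set N : ℝ → ℕ := fun t => sSup {n | a n ≤ t} with hNdef
  -- a tends to infinity
  have ha_top : Tendsto a atTop atTop := by
    have h1 : Tendsto (fun n : ℕ => (a n / n) * n) atTop atTop :=
      hA.pos_mul_atTop hm tendsto_natCast_atTop_atTop
    refine h1.congr' ?_
    filter_upwards [eventually_ge_atTop 1] with n hn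
    have hn0 : (n : ℝ) ≠ 0 := Nat.cast_ne_zero.2 (by omega)
    field_simp
  have bdd : ∀ t : ℝ, BddAbove {n | a n ≤ t} := by
    intro t
    obtain ⟨M, hM⟩ := (ha_top.eventually_gt_atTop t).exists_forall_of_atTop
    refine ⟨M, fun n hn => ?_⟩
    by_contra h
    exact absurd hn (not_le.2 (hM n (le_of_not_ge h)))
  have hNmem : ∀ t : ℝ, 0 ≤ t → a (N t) ≤ t := by
    intro t ht
    have : N t ∈ {n | a n ≤ t} := Nat.sSup_mem ⟨0, by simpa [ha0] using ht⟩ (bdd t)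
    exact this
  have hNsucc : ∀ t : ℝ, 0 ≤ t → t < a (N t + 1) := by
    intro t ht
    by_contra h
    have hmem : N t + 1 ∈ {n | a n ≤ t} := le_of_not_gt h
    have h2 : N t + 1 ≤ N t := le_csSup (bdd t) hmem
    omega
  have hN_top : Tendsto N atTop atTop :=
    tendsto_atTop_atTop.2 (fun n => ⟨a n, fun t ht => le_csSup (bdd t) ht⟩)
  -- (n+1)/n → 1
  have hratio : Tendsto (fun n : ℕ => ((n : ℝ) + 1) / n) atTop (𝓝 1) := by
    have h2 : Tendsto (fun n : ℕ => 1 + (n : ℝ)⁻¹) atTop (𝓝 (1 + 0)) :=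
      tendsto_const_nhds.add (tendsto_inv_atTop_zero.comp tendsto_natCast_atTop_atTop)
    rw [add_zero] at h2
    refine h2.congr' ?_
    filter_upwards [eventually_ge_atTop 1] with n hn
    have hn0 : (n : ℝ) ≠ 0 := Nat.cast_ne_zero.2 (by omega)
    field_simp
  have hA' : Tendsto (fun n : ℕ => a (n + 1) / n) atTop (𝓝 m) := by
    have h1 : Tendsto (fun n : ℕ => (a (n + 1) / ((n : ℝ) + 1)) * (((n : ℝ) + 1) / n))
        atTop (𝓝 (m * 1)) := by
      refine Tendsto.mul ?_ hratio
      have h3 := hA.comp (tendsto_add_atTop_nat 1)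
      refine h3.congr fun n => ?_
      simp only [Function.comp]
      push_cast
      rfl
    rw [mul_one] at h1
    refine h1.congr' ?_
    filter_upwards [eventually_ge_atTop 1] with n hn
    have hn0 : (n : ℝ) ≠ 0 := Nat.cast_ne_zero.2 (by omega)
    have hn1 : (n : ℝ) + 1 ≠ 0 := by positivity
    field_simp
  -- sandwich : t / N t → m
  have hNpos : ∀ᶠ t : ℝ in atTop, 1 ≤ N t := hN_top.eventually_ge_atTop 1
  have hlow : Tendsto (fun t : ℝ => a (N t) / (N t)) atTop (𝓝 m) := hA.comp hN_top
  have hhigh : Tendsto (fun t : ℝ => a (N t + 1) / (N t)) atTop (𝓝 m) := hA'.comp hN_top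
  have hTdiv : Tendsto (fun t : ℝ => t / N t) atTop (𝓝 m) := by
    refine tendsto_of_tendsto_of_tendsto_of_le_of_le' hlow hhigh ?_ ?_
    · filter_upwards [eventually_ge_atTop (0 : ℝ), hNpos] with t ht hNt
      have : (0 : ℝ) < N t := by exact_mod_cast hNt
      gcongr
      exact hNmem t ht
    · filter_upwards [eventually_ge_atTop (0 : ℝ), hNpos] with t ht hNt
      have : (0 : ℝ) < N t := by exact_mod_cast hNt
      gcongr
      exact (hNsucc t ht).le
  have hNt : Tendsto (fun t : ℝ => (N t : ℝ) / t) atTop (𝓝 m⁻¹) := by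
    have := hTdiv.inv₀ hm.ne'
    simpa [inv_div] using this
  have hBN : Tendsto (fun t : ℝ => b (N t) / (N t)) atTop (𝓝 L) := hB.comp hN_top
  have hfin : Tendsto (fun t : ℝ => (b (N t) / (N t)) * ((N t : ℝ) / t)) atTop
      (𝓝 (L * m⁻¹)) := hBN.mul hNt
  rw [div_eq_mul_inv]
  refine hfin.congr' ?_
  filter_upwards [hNpos] with t hNt
  have hn0 : ((N t : ℝ)) ≠ 0 := Nat.cast_ne_zero.2 (by omega)
  field_simp
  rfl

/-- Strong law for renewal reward processes: `Z_t / t = (∑_{i=1}^{N_t} Y_i) / t → E[Y]/E[X]`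
almost surely as `t → ∞`, for i.i.d. pairs `(X_n, Y_n)`. -/
theorem stmt11 {Ω : Type*} [MeasurableSpace Ω] (μ : Measure Ω) [IsProbabilityMeasure μ]
    (X Y : ℕ → Ω → ℝ)
    (hXmeas : ∀ i, Measurable (X i)) (hYmeas : ∀ i, Measurable (Y i))
    (hXnonneg : ∀ i, ∀ᵐ ω ∂μ, 0 ≤ X i ω)
    (hiid : ∀ i j, IdentDistrib (fun ω => (X i ω, Y i ω)) (fun ω => (X j ω, Y j ω)) μ μ)
    (hindep : iIndepFun (fun i ω => (X i ω, Y i ω)) μ)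
    (hX0 : μ {ω | X 0 ω = 0} < 1)
    (hXint : Integrable (X 0) μ) (hYint : Integrable (Y 0) μ)
    (T : ℕ → Ω → ℝ) (hT : ∀ n ω, T n ω = ∑ i ∈ Finset.range n, X i ω)
    (N : ℝ → Ω → ℕ) (hN : ∀ t ω, N t ω = sSup {n | T n ω ≤ t}) :
    ∀ᵐ ω ∂μ, Tendsto (fun t : ℝ => (∑ i ∈ Finset.range (N t ω), Y i ω) / t) atTop
      (nhds ((∫ ω, Y 0 ω ∂μ) / ∫ ω, X 0 ω ∂μ)) := by
  have hXid : ∀ i, IdentDistrib (X i) (X 0) μ μ :=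
    fun i => (hiid i 0).comp measurable_fst
  have hYid : ∀ i, IdentDistrib (Y i) (Y 0) μ μ :=
    fun i => (hiid i 0).comp measurable_snd
  have hXindep : Pairwise (Function.onFun (IndepFun · · μ) X) :=
    fun i j hij => ((hindep.indepFun hij).comp measurable_fst measurable_fst)
  have hYindep : Pairwise (Function.onFun (IndepFun · · μ) Y) :=
    fun i j hij => ((hindep.indepFun hij).comp measurable_snd measurable_snd)
  have hsllnX := strong_law_ae_real X hXint hXindep hXid
  have hsllnY := strong_law_ae_real Y hYint hYindep hYid
  set m := ∫ ω, X 0 ω ∂μ with hmdef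
  have hm0 : 0 ≤ m := integral_nonneg_of_ae (hXnonneg 0)
  have hm : 0 < m := by
    rcases hm0.lt_or_eq with h | h
    · exact h
    · exfalso
      have hzero : X 0 =ᵐ[μ] 0 :=
        (integral_eq_zero_iff_of_nonneg_ae (hXnonneg 0) hXint).1 h.symm
      have hc : μ {ω | ¬ X 0 ω = 0} = 0 := ae_iff.1 hzero
      have hs : MeasurableSet {ω | X 0 ω = 0} := (hXmeas 0) (measurableSet_singleton 0)
      have h1 : μ {ω | X 0 ω = 0} = 1 := by
        rw [← prob_compl_eq_zero_iff hs]
        simpa [Set.compl_setOf] using hc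
      rw [h1] at hX0
      exact lt_irrefl _ hX0
  filter_upwards [hsllnX, hsllnY] with ω hXω hYω
  have key := renewal_det (fun n => T n ω) (fun n => ∑ i ∈ Finset.range n, Y i ω)
    m (∫ ω, Y 0 ω ∂μ) hm (by simp [hT]) (by simpa [hT] using hXω) hYω
  refine key.congr fun t => ?_
  rw [hN]
end

section
/- For the Gamma(1,\mu) case (Y^s exponential with rate \mu) and Y^d exponential with rate \lambda \neq \mu: P_d = 1 - (\mu/(\mu-\lambda)) (L(\lambda)-L(\mu))/(1-L(\mu)), where P_d = P(D_{B(Y^s)} - Y^s \geq Y^d). -/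
open MeasureTheory ProbabilityTheory Filter Set
open scoped ENNReal Topology

/-- antiderivative fact -/
lemma stmt16_hasDeriv (μ0 lam b : ℝ) (hml : lam - μ0 ≠ 0) (t : ℝ) :
    HasDerivAt (fun t => -Real.exp (-(μ0*t)) - μ0 * Real.exp (-(lam*b)) / (lam - μ0) * Real.exp ((lam-μ0)*t))
      ((1 - Real.exp (-(lam*(b-t)))) * (μ0 * Real.exp (-(μ0*t)))) t := by
  have h1 : HasDerivAt (fun t : ℝ => Real.exp (-(μ0*t))) (Real.exp (-(μ0*t)) * (-μ0)) t := by
    have := ((hasDerivAt_id t).const_mul (-μ0)).exp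
    simpa [mul_comm, neg_mul] using this
  have h2 : HasDerivAt (fun t : ℝ => Real.exp ((lam-μ0)*t)) (Real.exp ((lam-μ0)*t) * (lam-μ0)) t := by
    have := ((hasDerivAt_id t).const_mul (lam-μ0)).exp
    simpa [mul_comm] using this
  have := (h1.neg).sub ((h2.const_mul (μ0 * Real.exp (-(lam*b)) / (lam - μ0))))
  refine this.congr_deriv ?_
  have he : Real.exp (-(lam*(b-t))) * Real.exp (-(μ0 * t)) = Real.exp (-(lam*b)) * Real.exp ((lam-μ0)*t) := by
    rw [← Real.exp_add, ← Real.exp_add]; ring_nf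
  field_simp
  ring_nf at he ⊢
  linear_combination μ0 * he

lemma stmt16_intInt (μ0 lam a b : ℝ) (hμ0 : 0 < μ0) (hne : lam ≠ μ0) (hab : a ≤ b) :
    ∫ t in a..b, (1 - Real.exp (-(lam*(b-t)))) * (μ0 * Real.exp (-(μ0*t)))
      = Real.exp (-(μ0*a)) - Real.exp (-(μ0*b))
        - (μ0/(μ0-lam)) * (Real.exp (-(lam*(b-a))) * Real.exp (-(μ0*a)) - Real.exp (-(μ0*b))) := by
  have hml : lam - μ0 ≠ 0 := sub_ne_zero.2 hne
  have hcont : Continuous fun t => (1 - Real.exp (-(lam*(b-t)))) * (μ0 * Real.exp (-(μ0*t))) := by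
    fun_prop
  rw [intervalIntegral.integral_eq_sub_of_hasDerivAt
    (fun t _ => stmt16_hasDeriv μ0 lam b hml t) (hcont.intervalIntegrable a b)]
  have hb : Real.exp (-(lam*b)) * Real.exp ((lam-μ0)*b) = Real.exp (-(μ0*b)) := by
    rw [← Real.exp_add]; ring_nf
  have ha : Real.exp (-(lam*b)) * Real.exp ((lam-μ0)*a) = Real.exp (-(lam*(b-a))) * Real.exp (-(μ0*a)) := by
    rw [← Real.exp_add, ← Real.exp_add]; ring_nf
  have hml' : μ0 - lam ≠ 0 := sub_ne_zero.2 (fun h => hne h.symm)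
  rw [← hb, ← ha]
  field_simp
  ring

lemma stmt16_psi_nonneg (μ0 lam a b : ℝ) (hμ0 : 0 < μ0) (hlam : 0 < lam) (hne : lam ≠ μ0) (hab : a ≤ b) :
    0 ≤ Real.exp (-(μ0*a)) - Real.exp (-(μ0*b))
        - (μ0/(μ0-lam)) * (Real.exp (-(lam*(b-a))) * Real.exp (-(μ0*a)) - Real.exp (-(μ0*b))) := by
  rw [← stmt16_intInt μ0 lam a b hμ0 hne hab]
  apply intervalIntegral.integral_nonneg hab
  intro t ht
  have h1 : Real.exp (-(lam*(b-t))) ≤ 1 := by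
    rw [Real.exp_le_one_iff]
    nlinarith [ht.2]
  have h2 := Real.exp_pos (-(μ0*t))
  exact mul_nonneg (by linarith) (le_of_lt (mul_pos hμ0 h2))

lemma stmt16_exp_Iic {r : ℝ} (hr : 0 < r) (x : ℝ) :
    expMeasure r (Iic x) = ENNReal.ofReal (if 0 ≤ x then 1 - Real.exp (-(r*x)) else 0) := by
  rw [show expMeasure r = volume.withDensity (exponentialPDF r) from rfl,
    withDensity_apply _ measurableSet_Iic, lintegral_exponentialPDF_eq_antiDeriv hr x]

lemma stmt16_exp_Ioi {r : ℝ} (hr : 0 < r) {x : ℝ} (hx : 0 ≤ x) :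
    expMeasure r (Ioi x) = ENNReal.ofReal (Real.exp (-(r*x))) := by
  haveI : IsProbabilityMeasure (expMeasure r) := isProbabilityMeasure_expMeasure hr
  have h1 : Ioi x = (Iic x)ᶜ := by simp
  rw [h1, measure_compl measurableSet_Iic (measure_ne_top _ _), stmt16_exp_Iic hr x,
    measure_univ, if_pos hx]
  have he : Real.exp (-(r*x)) ≤ 1 := Real.exp_le_one_iff.2 (by nlinarith)
  rw [← ENNReal.ofReal_one, ← ENNReal.ofReal_sub _ (by linarith)]
  norm_num

-- the inner integral over the exponential distribution of Ys
lemma stmt16_inner (μ0 lam : ℝ) (hμ0 : 0 < μ0) (hlam : 0 < lam) (hne : lam ≠ μ0)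
    {a b : ℝ} (ha : 0 ≤ a) (hab : a ≤ b) :
    ∫⁻ t, ENNReal.ofReal (if a < t ∧ t ≤ b then
        (if 0 ≤ b - t then 1 - Real.exp (-(lam*(b-t))) else 0) else 0) ∂(expMeasure μ0)
      = ENNReal.ofReal (Real.exp (-(μ0*a)) - Real.exp (-(μ0*b))
        - (μ0/(μ0-lam)) * (Real.exp (-(lam*(b-a))) * Real.exp (-(μ0*a)) - Real.exp (-(μ0*b)))) := by
  have hg : Measurable fun t => ENNReal.ofReal (if a < t ∧ t ≤ b then
      (if 0 ≤ b - t then 1 - Real.exp (-(lam*(b-t))) else 0) else 0) := by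
    apply Measurable.ennreal_ofReal
    apply Measurable.ite (measurableSet_Ioc (a := a) (b := b))
    · apply Measurable.ite
      · exact measurableSet_le measurable_const (measurable_const.sub measurable_id)
      · fun_prop
      · fun_prop
    · fun_prop
  rw [show expMeasure μ0 = volume.withDensity (exponentialPDF μ0) from rfl,
    lintegral_withDensity_eq_lintegral_mul _ (show Measurable (exponentialPDF μ0) from (measurable_exponentialPDFReal μ0).ennreal_ofReal) hg]
  have hind : ∀ t : ℝ, (exponentialPDF μ0 * fun t => ENNReal.ofReal (if a < t ∧ t ≤ b then
      (if 0 ≤ b - t then 1 - Real.exp (-(lam*(b-t))) else 0) else 0)) t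
      = Set.indicator (Ioc a b)
          (fun t => ENNReal.ofReal ((1 - Real.exp (-(lam*(b-t)))) * (μ0 * Real.exp (-(μ0*t))))) t := by
    intro t
    simp only [Pi.mul_apply, Set.indicator, mem_Ioc]
    by_cases h : a < t ∧ t ≤ b
    · rw [if_pos h, if_pos h, if_pos (by linarith [h.2]), exponentialPDF_of_nonneg (by linarith [h.1]),
        ← ENNReal.ofReal_mul (by positivity)]
      ring_nf
    · rw [if_neg h, if_neg h]; simp
  rw [lintegral_congr hind, lintegral_indicator measurableSet_Ioc]
  have hcont : Continuous fun t => (1 - Real.exp (-(lam*(b-t)))) * (μ0 * Real.exp (-(μ0*t))) := by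
    fun_prop
  rw [← ofReal_integral_eq_lintegral_ofReal (hcont.integrableOn_Ioc.integrable)]
  · rw [← intervalIntegral.integral_of_le hab, stmt16_intInt μ0 lam a b hμ0 hne hab]
  · filter_upwards [ae_restrict_mem measurableSet_Ioc] with t ht
    have h1 : Real.exp (-(lam*(b-t))) ≤ 1 := Real.exp_le_one_iff.2 (by nlinarith [ht.2])
    have h2 := Real.exp_pos (-(μ0*t))
    exact mul_nonneg (by linarith) (le_of_lt (mul_pos hμ0 h2))

lemma stmt16_prodL {Ω : Type*} [MeasurableSpace Ω] (μ : Measure Ω) [IsProbabilityMeasure μ]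
    (C : ℕ → Ω → ℝ) (hCmeas : ∀ i, Measurable (C i))
    (hCiid : ∀ i j, IdentDistrib (C i) (C j) μ μ)
    (hCindep : iIndepFun C μ) (s : ℕ → ℝ) :
    ∀ k, ∫ ω, ∏ i ∈ Finset.range k, Real.exp (-(s i * C i ω)) ∂μ
      = ∏ i ∈ Finset.range k, ∫ ω, Real.exp (-(s i * C 0 ω)) ∂μ := by
  set F : ℕ → Ω → ℝ := fun i ω => Real.exp (-(s i * C i ω)) with hF
  have hFmeas : ∀ i, Measurable (F i) := fun i => by
    exact (((hCmeas i).const_mul (s i)).neg).exp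
  have hFindep : iIndepFun F μ := by
    exact hCindep.comp (fun i x => Real.exp (-(s i * x)))
      (fun i => ((measurable_id.const_mul (s i)).neg).exp)
  intro k
  induction k with
  | zero => simp
  | succ k ih =>
    have hstep := IndepFun.integral_mul_eq_mul_integral (hFindep.indepFun_prod_range_succ hFmeas k)
      (by
        have : Measurable (fun ω => ∏ i ∈ Finset.range k, F i ω) :=
          Finset.measurable_prod _ (fun i _ => hFmeas i)
        have h2 : (∏ j ∈ Finset.range k, F j) = fun ω => ∏ i ∈ Finset.range k, F i ω :=
          funext fun ω => Finset.prod_apply ω _ F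
        rw [h2]; exact this.aestronglyMeasurable)
      (hFmeas k).aestronglyMeasurable
    have h1 : ∫ ω, ∏ i ∈ Finset.range (k+1), F i ω ∂μ
        = (∫ ω, ∏ i ∈ Finset.range k, F i ω ∂μ) * ∫ ω, F k ω ∂μ := by
      have : (fun ω => ∏ i ∈ Finset.range (k+1), F i ω)
          = (∏ j ∈ Finset.range k, F j) * F k := by
        funext ω
        simp [Finset.prod_range_succ, Finset.prod_apply]
      rw [this, hstep]
      congr 1
      · exact integral_congr_ae (ae_of_all _ (fun ω => by simp [Finset.prod_apply]))
    rw [h1, ih, Finset.prod_range_succ]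
    congr 1
    exact ((hCiid k 0).comp (((measurable_id.const_mul (s k)).neg).exp)).integral_eq
/-- For `Y^s` exponential with rate `μ` and `Y^d` exponential with rate `λ ≠ μ`:
`P_d = 1 - (μ/(μ-λ)) (L(λ) - L(μ))/(1 - L(μ))` where
`P_d = P(D_{B(Y^s)} - Y^s ≥ Y^d)`. -/
theorem stmt16 {Ω : Type*} [MeasurableSpace Ω] (μ : Measure Ω) [IsProbabilityMeasure μ]
    (C : ℕ → Ω → ℝ) (Ys Yd : Ω → ℝ) (μ0 lam : ℝ) (hμ0 : 0 < μ0) (hlam : 0 < lam)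
    (hne : lam ≠ μ0)
    (hCmeas : ∀ i, Measurable (C i)) (hYsmeas : Measurable Ys) (hYdmeas : Measurable Yd)
    (hCpos : ∀ i, ∀ᵐ ω ∂μ, 0 < C i ω)
    (hCiid : ∀ i j, IdentDistrib (C i) (C j) μ μ)
    (hCindep : iIndepFun C μ)
    (hindepS : IndepFun (fun ω => fun i => C i ω) Ys μ)
    (hindepD : IndepFun (fun ω => (Ys ω, fun i => C i ω)) Yd μ)
    (hYs : μ.map Ys = expMeasure μ0) (hYd : μ.map Yd = expMeasure lam)
    (D : ℕ → Ω → ℝ) (hD : ∀ k ω, D k ω = ∑ i ∈ Finset.range k, C i ω)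
    (B : ℝ → Ω → ℕ) (hB : ∀ t ω, B t ω = sInf {k | 1 ≤ k ∧ t ≤ D k ω})
    (L : ℝ → ℝ) (hL : ∀ s, L s = ∫ ω, Real.exp (-s * C 0 ω) ∂μ) :
    (μ {ω | Yd ω ≤ D (B (Ys ω) ω) ω - Ys ω}).toReal
      = 1 - (μ0 / (μ0 - lam)) * ((L lam - L μ0) / (1 - L μ0)) := by
  classical
  haveI hPμ0 : IsProbabilityMeasure (expMeasure μ0) := isProbabilityMeasure_expMeasure hμ0
  haveI hPlam : IsProbabilityMeasure (expMeasure lam) := isProbabilityMeasure_expMeasure hlam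
  set p : ℝ := L μ0 with hp
  set q : ℝ := L lam with hq
  set c : ℝ := μ0 / (μ0 - lam) with hc
  set Cvec : Ω → (ℕ → ℝ) := fun ω i => C i ω with hCvecdef
  have hCvecMeas : Measurable Cvec := measurable_pi_lambda _ (fun i => hCmeas i)
  haveI : IsProbabilityMeasure (μ.map Cvec) := Measure.isProbabilityMeasure_map hCvecMeas.aemeasurable
  set Dfun : ℕ → (ℕ → ℝ) → ℝ := fun k v => ∑ i ∈ Finset.range k, v i with hDfundef
  have hDfunMeas : ∀ k, Measurable (Dfun k) :=
    fun k => Finset.measurable_sum _ (fun i _ => measurable_pi_apply i)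
  have hDmeas : ∀ k, Measurable (D k) := fun k => by
    have : D k = fun ω => ∑ i ∈ Finset.range k, C i ω := funext (hD k)
    rw [this]; exact Finset.measurable_sum _ (fun i _ => hCmeas i)
  have hDC : ∀ k ω, D k ω = Dfun k (Cvec ω) := fun k ω => hD k ω
  have hDsucc : ∀ k ω, D (k+1) ω = D k ω + C k ω := fun k ω => by
    rw [hD, hD, Finset.sum_range_succ]
  have hCae : ∀ᵐ ω ∂μ, ∀ i, 0 < C i ω := ae_all_iff.2 hCpos
  -- Laplace transform values
  have hLs : ∀ s : ℝ, L s = ∫ ω, Real.exp (-(s * C 0 ω)) ∂μ := fun s => by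
    rw [hL]; congr 1; funext ω; rw [neg_mul]
  have hexpD : ∀ (s : ℝ) (k : ℕ), ∫ ω, Real.exp (-(s * D k ω)) ∂μ = (L s)^k := by
    intro s k
    have h1 : ∀ ω, Real.exp (-(s * D k ω)) = ∏ i ∈ Finset.range k, Real.exp (-(s * C i ω)) := by
      intro ω
      rw [← Real.exp_sum]
      congr 1
      rw [hD, Finset.mul_sum, ← Finset.sum_neg_distrib]
    calc ∫ ω, Real.exp (-(s * D k ω)) ∂μ
        = ∫ ω, ∏ i ∈ Finset.range k, Real.exp (-(s * C i ω)) ∂μ := by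
          exact integral_congr_ae (ae_of_all _ (fun ω => h1 ω))
      _ = ∏ i ∈ Finset.range k, ∫ ω, Real.exp (-(s * C 0 ω)) ∂μ :=
          stmt16_prodL μ C hCmeas hCiid hCindep (fun _ => s) k
      _ = (L s)^k := by rw [Finset.prod_const, Finset.card_range, hLs]
  have hexpCD : ∀ k : ℕ,
      ∫ ω, Real.exp (-(lam * C k ω)) * Real.exp (-(μ0 * D k ω)) ∂μ = q * p^k := by
    intro k
    set s : ℕ → ℝ := fun i => if i = k then lam else μ0 with hs
    have h1 : ∀ ω, Real.exp (-(lam * C k ω)) * Real.exp (-(μ0 * D k ω))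
        = ∏ i ∈ Finset.range (k+1), Real.exp (-(s i * C i ω)) := by
      intro ω
      rw [Finset.prod_range_succ]
      have h2 : ∏ i ∈ Finset.range k, Real.exp (-(s i * C i ω))
          = ∏ i ∈ Finset.range k, Real.exp (-(μ0 * C i ω)) := by
        apply Finset.prod_congr rfl
        intro i hi
        rw [hs]
        simp only [if_neg (Nat.ne_of_lt (Finset.mem_range.1 hi))]
      rw [h2, hs]
      simp only [if_pos rfl]
      rw [mul_comm]
      congr 1
      rw [← Real.exp_sum]
      congr 1
      rw [hD, Finset.mul_sum, ← Finset.sum_neg_distrib]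
    calc ∫ ω, Real.exp (-(lam * C k ω)) * Real.exp (-(μ0 * D k ω)) ∂μ
        = ∫ ω, ∏ i ∈ Finset.range (k+1), Real.exp (-(s i * C i ω)) ∂μ :=
          integral_congr_ae (ae_of_all _ h1)
      _ = ∏ i ∈ Finset.range (k+1), ∫ ω, Real.exp (-(s i * C 0 ω)) ∂μ :=
          stmt16_prodL μ C hCmeas hCiid hCindep s (k+1)
      _ = q * p^k := by
        rw [Finset.prod_range_succ]
        have h2 : ∏ i ∈ Finset.range k, ∫ ω, Real.exp (-(s i * C 0 ω)) ∂μ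
            = ∏ _i ∈ Finset.range k, p := by
          apply Finset.prod_congr rfl
          intro i hi
          rw [hs]
          simp only [if_neg (Nat.ne_of_lt (Finset.mem_range.1 hi))]
          rw [hp, hLs]
        rw [h2, Finset.prod_const, Finset.card_range, hs]
        simp only [if_pos rfl, if_true]
        rw [hq, hLs, mul_comm]
  -- integrability of bounded functions
  have hint1 : ∀ g : Ω → ℝ, Measurable g → (∀ᵐ ω ∂μ, 0 ≤ g ω ∧ g ω ≤ 1) → Integrable g μ := by
    intro g hg hb
    refine Integrable.mono' (integrable_const 1) hg.aestronglyMeasurable ?_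
    filter_upwards [hb] with ω h
    rw [Real.norm_eq_abs, abs_of_nonneg h.1]; exact h.2
  have hDnn : ∀ᵐ ω ∂μ, ∀ k, 0 ≤ D k ω := by
    filter_upwards [hCae] with ω h k
    rw [hD]; exact Finset.sum_nonneg (fun i _ => (h i).le)
  have hintD : ∀ (s : ℝ), 0 ≤ s → ∀ k, Integrable (fun ω => Real.exp (-(s * D k ω))) μ := by
    intro s hs k
    apply hint1 (fun ω => Real.exp (-(s * D k ω))) (((hDmeas k).const_mul s).neg.exp)
    filter_upwards [hDnn] with ω h
    exact ⟨(Real.exp_pos _).le, Real.exp_le_one_iff.2 (by nlinarith [h k])⟩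
  have hintCD : ∀ k, Integrable
      (fun ω => Real.exp (-(lam * C k ω)) * Real.exp (-(μ0 * D k ω))) μ := by
    intro k
    apply hint1 (fun ω => Real.exp (-(lam * C k ω)) * Real.exp (-(μ0 * D k ω))) ((((hCmeas k).const_mul lam).neg.exp).mul (((hDmeas k).const_mul μ0).neg.exp))
    filter_upwards [hDnn, hCae] with ω h h2
    constructor
    · positivity
    · have e1 : Real.exp (-(lam * C k ω)) ≤ 1 := Real.exp_le_one_iff.2 (by nlinarith [(h2 k).le])
      have e2 : Real.exp (-(μ0 * D k ω)) ≤ 1 := Real.exp_le_one_iff.2 (by nlinarith [h k])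
      nlinarith [Real.exp_pos (-(lam * C k ω)), Real.exp_pos (-(μ0 * D k ω))]
  -- facts about p
  have hp0 : 0 ≤ p := by
    rw [hp, hLs]; exact integral_nonneg (fun ω => (Real.exp_pos _).le)
  have hp1 : p < 1 := by
    have hC0 : Integrable (fun ω => Real.exp (-(μ0 * C 0 ω))) μ := by
      apply hint1 (fun ω => Real.exp (-(μ0 * C 0 ω))) (((hCmeas 0).const_mul μ0).neg.exp)
      filter_upwards [hCae] with ω h
      exact ⟨(Real.exp_pos _).le, Real.exp_le_one_iff.2 (by nlinarith [(h 0).le])⟩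
    have key : 0 < ∫ ω, (1 - Real.exp (-(μ0 * C 0 ω))) ∂μ := by
      rw [integral_pos_iff_support_of_nonneg_ae]
      · have hsub : {ω | 0 < C 0 ω} ⊆ Function.support fun ω => 1 - Real.exp (-(μ0 * C 0 ω)) := by
          intro ω h
          have h' : 0 < C 0 ω := h
          have : Real.exp (-(μ0 * C 0 ω)) < 1 := by
            rw [Real.exp_lt_one_iff]; nlinarith [mul_pos hμ0 h']
          simp only [Function.mem_support]
          intro hcon
          nlinarith
        have h1 : μ {ω | 0 < C 0 ω} = 1 := by
          have h0 : μ {ω | 0 < C 0 ω}ᶜ = 0 := by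
            have h5 := hCpos 0
            rw [ae_iff] at h5
            convert h5 using 2
            rfl
          have hc : μ {ω | 0 < C 0 ω} + μ {ω | 0 < C 0 ω}ᶜ = μ Set.univ :=
            measure_add_measure_compl (measurableSet_lt measurable_const (hCmeas 0))
          rw [h0, add_zero, measure_univ] at hc
          exact hc
        calc (0:ℝ≥0∞) < 1 := by norm_num
          _ = μ {ω | 0 < C 0 ω} := h1.symm
          _ ≤ μ (Function.support fun ω => 1 - Real.exp (-(μ0 * C 0 ω))) := measure_mono hsub
      · filter_upwards [hCae] with ω h
        have : Real.exp (-(μ0 * C 0 ω)) ≤ 1 := Real.exp_le_one_iff.2 (by nlinarith [(h 0).le])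
        simp only [Pi.zero_apply]; linarith
      · exact (integrable_const 1).sub hC0
    have : ∫ ω, (1 - Real.exp (-(μ0 * C 0 ω))) ∂μ = 1 - p := by
      rw [integral_sub (integrable_const 1) hC0, integral_const, probReal_univ, hp, hLs]
      simp
    rw [this] at key; linarith
  -- joint distributions
  have hW : Measurable (fun ω => (Ys ω, Cvec ω)) := hYsmeas.prodMk hCvecMeas
  have hJointD : μ.map (fun ω => ((Ys ω, Cvec ω), Yd ω))
      = (μ.map (fun ω => (Ys ω, Cvec ω))).prod (expMeasure lam) := by
    rw [← hYd]
    exact (indepFun_iff_map_prod_eq_prod_map_map hW.aemeasurable hYdmeas.aemeasurable).1 hindepD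
  have hJointS : μ.map (fun ω => (Cvec ω, Ys ω)) = (μ.map Cvec).prod (expMeasure μ0) := by
    rw [← hYs]
    exact (indepFun_iff_map_prod_eq_prod_map_map hCvecMeas.aemeasurable
      hYsmeas.aemeasurable).1 hindepS
  -- a.e. positivity on the mapped measure
  have hposv : ∀ᵐ v ∂(μ.map Cvec), ∀ i, 0 < v i := by
    rw [ae_map_iff hCvecMeas.aemeasurable]
    · exact hCae
    · have : {v : ℕ → ℝ | ∀ i, 0 < v i} = ⋂ i, {v | 0 < v i} := by ext v; simp
      rw [this]
      exact MeasurableSet.iInter fun i => measurableSet_lt measurable_const (measurable_pi_apply i)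
  -- the events
  set A : ℕ → Set Ω := fun k => {ω | D k ω < Ys ω ∧ Ys ω ≤ D (k+1) ω
      ∧ Yd ω ≤ D (k+1) ω - Ys ω} with hA
  set tk : ℕ → ℝ := fun k => p^k - p^(k+1) - c*(q*p^k - p^(k+1)) with htk
  have hAk : ∀ k, μ (A k) = ENNReal.ofReal (tk k) ∧ 0 ≤ tk k := by
    intro k
    set u : ℝ → ℝ := fun x => if 0 ≤ x then 1 - Real.exp (-(lam*x)) else 0 with hudef
    have huMeas : Measurable u := by
      apply Measurable.ite (measurableSet_le measurable_const measurable_id) ?_ measurable_const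
      fun_prop
    set F2 : (ℕ → ℝ) × ℝ → ℝ := fun x => if Dfun k x.1 < x.2 ∧ x.2 ≤ Dfun (k+1) x.1
        then u (Dfun (k+1) x.1 - x.2) else 0 with hF2def
    have hcondMeas : MeasurableSet {x : (ℕ → ℝ) × ℝ | Dfun k x.1 < x.2 ∧ x.2 ≤ Dfun (k+1) x.1} :=
      (measurableSet_lt ((hDfunMeas k).comp measurable_fst) measurable_snd).inter
        (measurableSet_le measurable_snd ((hDfunMeas (k+1)).comp measurable_fst))
    have hF2Meas : Measurable F2 :=
      Measurable.ite hcondMeas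
        (huMeas.comp (((hDfunMeas (k+1)).comp measurable_fst).sub measurable_snd))
        measurable_const
    set S : Set ((ℝ × (ℕ → ℝ)) × ℝ) := {x | Dfun k x.1.2 < x.1.1 ∧ x.1.1 ≤ Dfun (k+1) x.1.2
        ∧ x.2 ≤ Dfun (k+1) x.1.2 - x.1.1} with hSdef
    have hSmeas : MeasurableSet S := by
      rw [hSdef]
      simp only [Set.setOf_and]
      refine MeasurableSet.inter ?_ (MeasurableSet.inter ?_ ?_)
      · exact measurableSet_lt ((hDfunMeas k).comp (measurable_snd.comp measurable_fst))
          (measurable_fst.comp measurable_fst)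
      · exact measurableSet_le (measurable_fst.comp measurable_fst)
          ((hDfunMeas (k+1)).comp (measurable_snd.comp measurable_fst))
      · exact measurableSet_le measurable_snd
          (((hDfunMeas (k+1)).comp (measurable_snd.comp measurable_fst)).sub
            (measurable_fst.comp measurable_fst))
    have hA1 : A k = (fun ω => ((Ys ω, Cvec ω), Yd ω)) ⁻¹' S := by
      ext ω
      simp only [hA, Set.mem_setOf_eq, Set.mem_preimage, hSdef]
      rw [hDC k ω, hDC (k+1) ω]
    have stepA : μ (A k) = ∫⁻ ω, ENNReal.ofReal (F2 (Cvec ω, Ys ω)) ∂μ := by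
      rw [hA1, ← Measure.map_apply (hW.prodMk hYdmeas) hSmeas, hJointD,
        Measure.prod_apply hSmeas]
      have hinner : ∀ w : ℝ × (ℕ → ℝ), expMeasure lam (Prod.mk w ⁻¹' S)
          = ENNReal.ofReal (F2 (w.2, w.1)) := by
        intro w
        by_cases hcond : Dfun k w.2 < w.1 ∧ w.1 ≤ Dfun (k+1) w.2
        · have he : Prod.mk w ⁻¹' S = Set.Iic (Dfun (k+1) w.2 - w.1) := by
            ext y
            simp only [Set.mem_preimage, hSdef, Set.mem_setOf_eq, Set.mem_Iic]
            exact ⟨fun h => h.2.2, fun h => ⟨hcond.1, hcond.2, h⟩⟩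
          rw [he, stmt16_exp_Iic hlam, hF2def]
          simp only [if_pos hcond]
          rfl
        · have he : Prod.mk w ⁻¹' S = ∅ := by
            ext y
            simp only [Set.mem_preimage, hSdef, Set.mem_setOf_eq, Set.mem_empty_iff_false,
              iff_false]
            intro h
            exact hcond ⟨h.1, h.2.1⟩
          rw [he, measure_empty, hF2def]
          simp only [if_neg hcond]
          simp
      have hmf : Measurable fun w : ℝ × (ℕ → ℝ) => ENNReal.ofReal (F2 (w.2, w.1)) :=
        (hF2Meas.comp (measurable_snd.prodMk measurable_fst)).ennreal_ofReal
      rw [lintegral_congr hinner, lintegral_map hmf hW]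
    have stepB : ∫⁻ ω, ENNReal.ofReal (F2 (Cvec ω, Ys ω)) ∂μ
        = ∫⁻ v, ∫⁻ t, ENNReal.ofReal (F2 (v, t)) ∂(expMeasure μ0) ∂(μ.map Cvec) := by
      rw [← lintegral_map hF2Meas.ennreal_ofReal (hCvecMeas.prodMk hYsmeas), hJointS,
        lintegral_prod _ hF2Meas.ennreal_ofReal.aemeasurable]
    set ψ : (ℕ → ℝ) → ℝ := fun v => Real.exp (-(μ0 * Dfun k v)) - Real.exp (-(μ0 * Dfun (k+1) v))
        - (μ0/(μ0-lam)) * (Real.exp (-(lam * (Dfun (k+1) v - Dfun k v)))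
              * Real.exp (-(μ0 * Dfun k v))
          - Real.exp (-(μ0 * Dfun (k+1) v))) with hψdef
    have hψMeas : Measurable ψ := by
      refine ((((hDfunMeas k).const_mul μ0).neg.exp.sub
        ((hDfunMeas (k+1)).const_mul μ0).neg.exp).sub (Measurable.const_mul ?_ _))
      exact ((((hDfunMeas (k+1)).sub (hDfunMeas k)).const_mul lam).neg.exp.mul
          ((hDfunMeas k).const_mul μ0).neg.exp).sub
        ((hDfunMeas (k+1)).const_mul μ0).neg.exp
    have stepC : ∫⁻ v, ∫⁻ t, ENNReal.ofReal (F2 (v, t)) ∂(expMeasure μ0) ∂(μ.map Cvec)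
        = ∫⁻ v, ENNReal.ofReal (ψ v) ∂(μ.map Cvec) := by
      apply lintegral_congr_ae
      filter_upwards [hposv] with v hv
      have ha : 0 ≤ Dfun k v := Finset.sum_nonneg fun i _ => (hv i).le
      have hab : Dfun k v ≤ Dfun (k+1) v := by
        have h5 : Dfun (k+1) v = Dfun k v + v k := Finset.sum_range_succ _ _
        nlinarith [hv k]
      calc ∫⁻ t, ENNReal.ofReal (F2 (v, t)) ∂(expMeasure μ0)
          = ∫⁻ t, ENNReal.ofReal (if Dfun k v < t ∧ t ≤ Dfun (k+1) v then
              (if 0 ≤ Dfun (k+1) v - t then 1 - Real.exp (-(lam*(Dfun (k+1) v - t))) else 0)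
              else 0) ∂(expMeasure μ0) := rfl
        _ = ENNReal.ofReal (ψ v) := by
            rw [stmt16_inner μ0 lam hμ0 hlam hne ha hab, hψdef]
    have stepD : ∫⁻ v, ENNReal.ofReal (ψ v) ∂(μ.map Cvec)
        = ∫⁻ ω, ENNReal.ofReal (ψ (Cvec ω)) ∂μ :=
      lintegral_map hψMeas.ennreal_ofReal hCvecMeas
    set g : Ω → ℝ := fun ω => Real.exp (-(μ0 * D k ω)) - Real.exp (-(μ0 * D (k+1) ω))
        - (μ0/(μ0-lam)) * (Real.exp (-(lam * C k ω)) * Real.exp (-(μ0 * D k ω))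
          - Real.exp (-(μ0 * D (k+1) ω))) with hgdef
    have hgψ : ∀ ω, ψ (Cvec ω) = g ω := by
      intro ω
      have h3 : Dfun (k+1) (Cvec ω) - Dfun k (Cvec ω) = C k ω := by
        rw [← hDC, ← hDC, hDsucc]; ring
      rw [hψdef, hgdef]
      simp only
      rw [h3, ← hDC, ← hDC]
    have hg1 := hintD μ0 hμ0.le k
    have hg2 := hintD μ0 hμ0.le (k+1)
    have hg3 := hintCD k
    have hgint : Integrable g μ :=
      (hg1.sub hg2).sub ((hg3.sub hg2).const_mul (μ0/(μ0-lam)))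
    have hgval : ∫ ω, g ω ∂μ = tk k := by
      have : ∫ ω, g ω ∂μ = (∫ ω, Real.exp (-(μ0 * D k ω)) ∂μ)
          - (∫ ω, Real.exp (-(μ0 * D (k+1) ω)) ∂μ)
          - (μ0/(μ0-lam)) * ((∫ ω, Real.exp (-(lam * C k ω)) * Real.exp (-(μ0 * D k ω)) ∂μ)
            - ∫ ω, Real.exp (-(μ0 * D (k+1) ω)) ∂μ) := by
        have hI12 : Integrable (fun ω => Real.exp (-(μ0 * D k ω))
            - Real.exp (-(μ0 * D (k+1) ω))) μ := hg1.sub hg2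
        have hI32 : Integrable (fun ω => Real.exp (-(lam * C k ω)) * Real.exp (-(μ0 * D k ω))
            - Real.exp (-(μ0 * D (k+1) ω))) μ := hg3.sub hg2
        have hI32' : Integrable (fun ω => (μ0/(μ0-lam)) * (Real.exp (-(lam * C k ω))
            * Real.exp (-(μ0 * D k ω)) - Real.exp (-(μ0 * D (k+1) ω)))) μ := hI32.const_mul _
        simp only [hgdef]
        rw [integral_sub hI12 hI32', integral_sub hg1 hg2,
          MeasureTheory.integral_const_mul, integral_sub hg3 hg2]
      rw [this, hexpD, hexpD, hexpCD, htk, ← hp, ← hc]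
    have hgnn : ∀ᵐ ω ∂μ, 0 ≤ g ω := by
      filter_upwards [hCae] with ω h
      have hab : D k ω ≤ D (k+1) ω := by
        rw [hDsucc]; nlinarith [h k]
      have h3 : C k ω = D (k+1) ω - D k ω := by rw [hDsucc]; ring
      have hres := stmt16_psi_nonneg μ0 lam (D k ω) (D (k+1) ω) hμ0 hlam hne hab
      rw [hgdef]
      simp only
      rw [h3]
      exact hres
    have hmain : μ (A k) = ENNReal.ofReal (tk k) := by
      rw [stepA, stepB, stepC, stepD]
      have heq : ∫⁻ ω, ENNReal.ofReal (ψ (Cvec ω)) ∂μ = ∫⁻ ω, ENNReal.ofReal (g ω) ∂μ :=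
        lintegral_congr fun ω => by rw [hgψ ω]
      rw [heq, ← ofReal_integral_eq_lintegral_ofReal hgint hgnn, hgval]
    refine ⟨hmain, ?_⟩
    rw [← hgval]
    exact integral_nonneg_of_ae hgnn
  have hDm : ∀ m, μ {ω | D m ω < Ys ω} ≤ ENNReal.ofReal (p ^ m) := by
    intro m
    have hSm : MeasurableSet {x : (ℕ → ℝ) × ℝ | Dfun m x.1 < x.2} :=
      measurableSet_lt ((hDfunMeas m).comp measurable_fst) measurable_snd
    have h1 : {ω | D m ω < Ys ω} = (fun ω => (Cvec ω, Ys ω)) ⁻¹' {x | Dfun m x.1 < x.2} := by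
      ext ω
      simp only [Set.mem_setOf_eq, Set.mem_preimage]
      rw [hDC]
    rw [h1, ← Measure.map_apply (hCvecMeas.prodMk hYsmeas) hSm, hJointS,
      Measure.prod_apply hSm]
    have h2 : ∫⁻ v, expMeasure μ0 (Prod.mk v ⁻¹' {x : (ℕ → ℝ) × ℝ | Dfun m x.1 < x.2}) ∂(μ.map Cvec)
        = ∫⁻ v, ENNReal.ofReal (Real.exp (-(μ0 * Dfun m v))) ∂(μ.map Cvec) := by
      apply lintegral_congr_ae
      filter_upwards [hposv] with v hv
      have h3 : Prod.mk v ⁻¹' {x : (ℕ → ℝ) × ℝ | Dfun m x.1 < x.2} = Set.Ioi (Dfun m v) := rfl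
      have h5 : 0 ≤ Dfun m v := Finset.sum_nonneg (fun i _ => (hv i).le)
      rw [h3, stmt16_exp_Ioi hμ0 h5]
    rw [h2]
    have h4 : ∫⁻ v, ENNReal.ofReal (Real.exp (-(μ0 * Dfun m v))) ∂(μ.map Cvec)
        = ∫⁻ ω, ENNReal.ofReal (Real.exp (-(μ0 * D m ω))) ∂μ := by
      rw [lintegral_map (f := fun v => ENNReal.ofReal (Real.exp (-(μ0 * Dfun m v)))) (((hDfunMeas m).const_mul μ0).neg.exp.ennreal_ofReal) hCvecMeas]
      exact lintegral_congr fun ω => by rw [hDC]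
    rw [h4, ← ofReal_integral_eq_lintegral_ofReal (hintD μ0 hμ0.le m)
      (ae_of_all _ fun ω => (Real.exp_pos _).le), hexpD, ← hp]
  have hsum : μ {ω | Yd ω ≤ D (B (Ys ω) ω) ω - Ys ω} = ∑' k, μ (A k) := by
    have hYspos : ∀ᵐ ω ∂μ, 0 < Ys ω := by
      rw [ae_iff]
      have h1 : {ω | ¬ 0 < Ys ω} = Ys ⁻¹' (Set.Iic 0) := by
        ext ω; simp [not_lt]
      rw [h1, ← Measure.map_apply hYsmeas measurableSet_Iic, hYs, stmt16_exp_Iic hμ0]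
      norm_num
    have hN : μ (⋂ m, {ω | D (m+1) ω < Ys ω}) = 0 := by
      have hle : ∀ m : ℕ, μ (⋂ m, {ω | D (m+1) ω < Ys ω}) ≤ ENNReal.ofReal (p ^ (m+1)) :=
        fun m => le_trans (measure_mono (Set.iInter_subset _ m)) (hDm (m+1))
      have htend : Tendsto (fun m : ℕ => ENNReal.ofReal (p ^ (m+1))) atTop (𝓝 0) := by
        have h2 : Tendsto (fun m : ℕ => p ^ (m+1)) atTop (𝓝 0) :=
          (tendsto_pow_atTop_nhds_zero_of_lt_one hp0 hp1).comp (tendsto_add_atTop_nat 1)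
        have h3 := (ENNReal.continuous_ofReal.tendsto 0).comp h2
        rwa [ENNReal.ofReal_zero] at h3
      exact le_antisymm (ge_of_tendsto' htend hle) zero_le
    have hNae : ∀ᵐ ω ∂μ, ∃ m, Ys ω ≤ D (m+1) ω := by
      rw [ae_iff]
      have h1 : {ω | ¬ ∃ m, Ys ω ≤ D (m+1) ω} = ⋂ m, {ω | D (m+1) ω < Ys ω} := by
        ext ω
        simp only [Set.mem_setOf_eq, not_exists, not_le, Set.mem_iInter]
      rw [h1]; exact hN
    set Gset : Set Ω := {ω | (∀ i, 0 < C i ω) ∧ 0 < Ys ω ∧ ∃ m, Ys ω ≤ D (m+1) ω}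
      with hGsetdef
    have hGae : ∀ᵐ ω ∂μ, ω ∈ Gset := by
      filter_upwards [hCae, hYspos, hNae] with ω h1 h2 h3
      exact ⟨h1, h2, h3⟩
    have hGsetMeas : MeasurableSet Gset := by
      rw [hGsetdef]
      simp only [Set.setOf_and]
      refine MeasurableSet.inter ?_ (MeasurableSet.inter ?_ ?_)
      · have : {ω | ∀ i, 0 < C i ω} = ⋂ i, {ω | 0 < C i ω} := by ext ω; simp
        rw [this]
        exact MeasurableSet.iInter fun i => measurableSet_lt measurable_const (hCmeas i)
      · exact measurableSet_lt measurable_const hYsmeas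
      · have : {ω | ∃ m, Ys ω ≤ D (m+1) ω} = ⋃ m, {ω | Ys ω ≤ D (m+1) ω} := by ext ω; simp
        rw [this]
        exact MeasurableSet.iUnion fun m => measurableSet_le hYsmeas (hDmeas (m+1))
    have hDmono : ∀ ω, (∀ i, 0 < C i ω) → ∀ {m n : ℕ}, m ≤ n → D m ω ≤ D n ω := by
      intro ω h m n hmn
      rw [hD, hD]
      apply Finset.sum_le_sum_of_subset_of_nonneg (Finset.range_subset_range.2 hmn)
      intro i _ _; exact (h i).le
    have hBval : ∀ ω, (∀ i, 0 < C i ω) → ∀ k, D k ω < Ys ω → Ys ω ≤ D (k+1) ω →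
        B (Ys ω) ω = k + 1 := by
      intro ω hc k h1 h2
      rw [hB]
      apply le_antisymm
      · exact Nat.sInf_le (show 1 ≤ k+1 ∧ Ys ω ≤ D (k+1) ω from
          ⟨Nat.succ_le_succ (Nat.zero_le k), h2⟩)
      · apply le_csInf ⟨k+1, show 1 ≤ k+1 ∧ Ys ω ≤ D (k+1) ω from
          ⟨Nat.succ_le_succ (Nat.zero_le k), h2⟩⟩
        intro j hj
        by_contra hcon
        push_neg at hcon
        have hj2 : D j ω ≤ D k ω := hDmono ω hc (Nat.lt_succ_iff.1 hcon)
        exact absurd hj.2 (not_le.2 (lt_of_le_of_lt hj2 h1))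
    have hiff : ∀ ω, ω ∈ Gset → ((Yd ω ≤ D (B (Ys ω) ω) ω - Ys ω) ↔ ∃ k, ω ∈ A k) := by
      intro ω hω
      obtain ⟨hc, hYsp, hex⟩ := hω
      constructor
      · intro hT
        have hk1 : Ys ω ≤ D (Nat.find hex + 1) ω := Nat.find_spec hex
        have hk2 : D (Nat.find hex) ω < Ys ω := by
          rcases Nat.eq_zero_or_pos (Nat.find hex) with h0 | h0
          · rw [h0]
            have hD0 : D 0 ω = 0 := by rw [hD]; simp
            rw [hD0]; exact hYsp
          · obtain ⟨j, hj⟩ := Nat.exists_eq_succ_of_ne_zero (Nat.pos_iff_ne_zero.1 h0)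
            rw [hj]
            have := Nat.find_min hex (by rw [hj]; exact Nat.lt_succ_self j)
            exact not_le.1 this
        refine ⟨Nat.find hex, ?_⟩
        simp only [hA, Set.mem_setOf_eq]
        refine ⟨hk2, hk1, ?_⟩
        rwa [hBval ω hc (Nat.find hex) hk2 hk1] at hT
      · rintro ⟨k, hk⟩
        simp only [hA, Set.mem_setOf_eq] at hk
        obtain ⟨h1, h2, h3⟩ := hk
        rwa [hBval ω hc k h1 h2]
    have hdisj : Pairwise (Function.onFun Disjoint (fun k => A k ∩ Gset)) := by
      have key : ∀ k j, k < j → Disjoint (A k ∩ Gset) (A j ∩ Gset) := by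
        intro k j hlt
        apply Set.disjoint_left.2
        rintro ω ⟨hAkω, hGω⟩ ⟨hAjω, _⟩
        obtain ⟨hc, _, _⟩ := hGω
        have h5 : D (k+1) ω ≤ D j ω := hDmono ω hc hlt
        simp only [hA, Set.mem_setOf_eq] at hAkω hAjω
        linarith [hAkω.2.1, hAjω.1]
      intro k j hkj
      rcases lt_or_gt_of_ne hkj with h | h
      · exact key k j h
      · exact (key j k h).symm
    have hAmeas : ∀ k, MeasurableSet (A k) := by
      intro k
      have : A k = {ω | D k ω < Ys ω} ∩ ({ω | Ys ω ≤ D (k+1) ω}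
          ∩ {ω | Yd ω ≤ D (k+1) ω - Ys ω}) := by
        rfl
      rw [this]
      exact (measurableSet_lt (hDmeas k) hYsmeas).inter
        ((measurableSet_le hYsmeas (hDmeas (k+1))).inter
          (measurableSet_le hYdmeas ((hDmeas (k+1)).sub hYsmeas)))
    have hTU : {ω | Yd ω ≤ D (B (Ys ω) ω) ω - Ys ω} =ᵐ[μ] ⋃ k, (A k ∩ Gset) := by
      apply Filter.eventuallyEq_set.2
      filter_upwards [hGae] with ω hω
      simp only [Set.mem_setOf_eq, Set.mem_iUnion, Set.mem_inter_iff]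
      constructor
      · intro h
        obtain ⟨k, hk⟩ := (hiff ω hω).1 h
        exact ⟨k, hk, hω⟩
      · rintro ⟨k, hk, _⟩
        exact (hiff ω hω).2 ⟨k, hk⟩
    rw [measure_congr hTU, measure_iUnion hdisj (fun k => (hAmeas k).inter hGsetMeas)]
    apply tsum_congr
    intro k
    apply measure_congr
    apply Filter.eventuallyEq_set.2
    filter_upwards [hGae] with ω hω
    simp only [Set.mem_inter_iff]
    exact ⟨fun h => h.1, fun h => ⟨h, hω⟩⟩
  -- final computation
  have htkgeo : tk = fun k => ((1-p) - c*(q-p)) * p^k := by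
    funext k
    rw [htk]
    simp only [pow_succ]
    ring
  have hsummable : Summable tk := by
    rw [htkgeo]
    exact (summable_geometric_of_lt_one hp0 hp1).mul_left _
  have htknn : ∀ k, 0 ≤ tk k := fun k => (hAk k).2
  rw [hsum]
  have h1 : ∑' k, μ (A k) = ENNReal.ofReal (∑' k, tk k) := by
    rw [ENNReal.ofReal_tsum_of_nonneg htknn hsummable]
    exact tsum_congr (fun k => (hAk k).1)
  rw [h1, ENNReal.toReal_ofReal (tsum_nonneg htknn)]
  have h2 : ∑' k, tk k = ((1-p) - c*(q-p)) * (1-p)⁻¹ := by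
    rw [htkgeo, tsum_mul_left, tsum_geometric_of_lt_one hp0 hp1]
  rw [h2]
  have h3 : 1 - p ≠ 0 := sub_ne_zero.2 (fun h => absurd h.symm hp1.ne)
  field_simp
end
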